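/- arXiv:2005.04280 — 5 statements merged into one kernel-verified Lean document; each statement's English description precedes it below -/
import Mathlib

section
/- For every positive integer q, the sum over d with all prime factors dividing q of log(d)/d equals (q/φ(q)) · ∑_{p | q} log(p)/(p-1). -/
open Nat Real Finset

noncomputable def invHom : ℕ →* ℝ where
  toFun n := (n : ℝ)⁻¹
  map_one' := by simp
  map_mul' m n := by push_cast; rw [mul_inv]

lemma hasSum_inv_factored (s : Finset ℕ) (hs : ∀ p ∈ s, p.Prime) :
    HasSum (fun m : Nat.factoredNumbers s ↦ ((m : ℕ) : ℝ)⁻¹)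
      (∏ p ∈ s, (1 - (p : ℝ)⁻¹)⁻¹) := by
  have h := (EulerProduct.summable_and_hasSum_factoredNumbers_prod_filter_prime_geometric
    (f := invHom) (fun {p} hp => ?_) s).2
  · rwa [Finset.filter_true_of_mem hs] at h
  · have h2 : (2 : ℝ) ≤ p := by exact_mod_cast hp.two_le
    rw [show invHom p = ((p : ℝ))⁻¹ from rfl, Real.norm_eq_abs, abs_inv,
      abs_of_nonneg (by linarith)]
    rw [inv_lt_one_iff₀]
    right; linarith

set_option maxHeartbeats 1000000 in
lemma key (s : Finset ℕ) (hs : ∀ p ∈ s, p.Prime) :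
    HasSum (fun m : Nat.factoredNumbers s ↦ Real.log (m : ℕ) / ((m : ℕ) : ℝ))
      ((∏ p ∈ s, (1 - (p : ℝ)⁻¹)⁻¹) * ∑ p ∈ s, Real.log p / ((p : ℝ) - 1)) := by
  induction s using Finset.induction with
  | empty =>
      rw [Nat.factoredNumbers_empty]
      have h0 : (0 : ℝ) = (fun n : ℕ ↦ Real.log n / (n : ℝ)) 1 := by simp
      rw [Finset.prod_empty, Finset.sum_empty, mul_zero, h0]
      exact hasSum_singleton (1 : ℕ) (fun n : ℕ ↦ Real.log n / (n : ℝ))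
  | @insert p s hp ih =>
      have hpp : p.Prime := hs p (mem_insert_self p s)
      have hs' : ∀ q ∈ s, q.Prime := fun q hq ↦ hs q (mem_insert_of_mem hq)
      have hp2 : (2 : ℝ) ≤ p := by exact_mod_cast hpp.two_le
      have hx0 : (0 : ℝ) ≤ (p : ℝ)⁻¹ := by positivity
      have hx1 : (p : ℝ)⁻¹ < 1 := by
        rw [inv_lt_one_iff₀]; right; linarith
      -- sums over ℕ
      have hgeo : HasSum (fun e : ℕ ↦ ((p : ℝ)⁻¹) ^ e) (1 - (p : ℝ)⁻¹)⁻¹ :=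
        hasSum_geometric_of_lt_one hx0 hx1
      have hcoe : HasSum (fun e : ℕ ↦ (e : ℝ) * ((p : ℝ)⁻¹) ^ e)
          ((p : ℝ)⁻¹ / (1 - (p : ℝ)⁻¹) ^ 2) := by
        have := hasSum_coe_mul_geometric_of_norm_lt_one (𝕜 := ℝ) (r := (p : ℝ)⁻¹)
          (by rw [Real.norm_eq_abs, abs_of_nonneg hx0]; exact hx1)
        exact this
      have hg1 : HasSum (fun e : ℕ ↦ (e : ℝ) * Real.log p * ((p : ℝ)⁻¹) ^ e)
          (Real.log p * ((p : ℝ)⁻¹ / (1 - (p : ℝ)⁻¹) ^ 2)) := by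
        have := hcoe.mul_left (Real.log p)
        have h' : (fun e : ℕ ↦ (e : ℝ) * Real.log p * ((p : ℝ)⁻¹) ^ e) =
            fun i : ℕ ↦ Real.log p * ((i : ℝ) * ((p : ℝ)⁻¹) ^ i) := by funext e; ring
        rw [h']; exact this
      have hinv := hasSum_inv_factored s hs'
      -- nonnegativity
      have hlognn : ∀ m : Nat.factoredNumbers s, 0 ≤ Real.log (m : ℕ) / ((m : ℕ) : ℝ) := by
        intro m
        have : 1 ≤ ((m : ℕ) : ℝ) := by
          exact_mod_cast Nat.one_le_iff_ne_zero.mpr m.2.1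
        exact div_nonneg (Real.log_nonneg this) (by linarith)
      have hlogp0 : 0 ≤ Real.log p := Real.log_nonneg (by linarith)
      -- product-family sums
      have hprod1 : HasSum (fun x : ℕ × Nat.factoredNumbers s ↦
          ((x.1 : ℝ) * Real.log p * ((p : ℝ)⁻¹) ^ x.1) * ((x.2 : ℕ) : ℝ)⁻¹)
          (Real.log p * ((p : ℝ)⁻¹ / (1 - (p : ℝ)⁻¹) ^ 2) * ∏ q ∈ s, (1 - (q : ℝ)⁻¹)⁻¹) := by
        apply HasSum.mul hg1 hinv
        apply Summable.mul_of_nonneg hg1.summable hinv.summable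
          (fun e ↦ by positivity) (fun m ↦ by positivity)
      have hprod2 : HasSum (fun x : ℕ × Nat.factoredNumbers s ↦
          (((p : ℝ)⁻¹) ^ x.1) * (Real.log (x.2 : ℕ) / ((x.2 : ℕ) : ℝ)))
          ((1 - (p : ℝ)⁻¹)⁻¹ *
            ((∏ q ∈ s, (1 - (q : ℝ)⁻¹)⁻¹) * ∑ q ∈ s, Real.log q / ((q : ℝ) - 1))) := by
        apply HasSum.mul hgeo (ih hs')
        apply Summable.mul_of_nonneg hgeo.summable (ih hs').summable
          (fun e ↦ by positivity) hlognn
      have hsum := hprod1.add hprod2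
      rw [← (Nat.equivProdNatFactoredNumbers hpp hp).hasSum_iff]
      have heq : (fun m : Nat.factoredNumbers (insert p s) ↦
            Real.log (m : ℕ) / ((m : ℕ) : ℝ)) ∘ (Nat.equivProdNatFactoredNumbers hpp hp) =
          fun x : ℕ × Nat.factoredNumbers s ↦
            ((x.1 : ℝ) * Real.log p * ((p : ℝ)⁻¹) ^ x.1) * ((x.2 : ℕ) : ℝ)⁻¹ +
            (((p : ℝ)⁻¹) ^ x.1) * (Real.log (x.2 : ℕ) / ((x.2 : ℕ) : ℝ)) := by
        funext x
        simp only [Function.comp_apply, Nat.equivProdNatFactoredNumbers_apply']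
        have hm0 : (0 : ℝ) < ((x.2 : ℕ) : ℝ) := by
          exact_mod_cast Nat.pos_of_ne_zero x.2.2.1
        have hp0 : (0 : ℝ) < (p : ℝ) := by linarith
        push_cast
        rw [Real.log_mul (by positivity) (by positivity), Real.log_pow]
        field_simp
        rw [mul_assoc, ← mul_pow, mul_one_div_cancel hp0.ne', one_pow, mul_one]
      rw [heq]
      convert hsum using 1
      rw [Finset.prod_insert hp, Finset.sum_insert hp]
      have h1 : (1 : ℝ) - (p : ℝ)⁻¹ ≠ 0 := by
        have : (p : ℝ)⁻¹ < 1 := hx1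
        intro h; nlinarith
      have hpm1 : (p : ℝ) - 1 ≠ 0 := by intro h; nlinarith
      have hp0 : (p : ℝ) ≠ 0 := by intro h; nlinarith
      have hkey2 : (p : ℝ)⁻¹ / (1 - (p : ℝ)⁻¹) ^ 2 = (1 - (p : ℝ)⁻¹)⁻¹ * ((p : ℝ) - 1)⁻¹ := by
        field_simp
      rw [hkey2]
      ring

theorem stmt_2 (q : ℕ) (hq : 0 < q) :
    ∑' d : {d : ℕ // 0 < d ∧ ∀ p : ℕ, p.Prime → p ∣ d → p ∣ q},
        Real.log (d : ℕ) / (d : ℕ) =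
      ((q : ℝ) / q.totient) * ∑ p ∈ q.primeFactors, Real.log p / (p - 1) := by
  have hs : ∀ p ∈ q.primeFactors, p.Prime := fun p hp ↦ Nat.prime_of_mem_primeFactors hp
  have hkey := key q.primeFactors hs
  have hset : {d : ℕ | 0 < d ∧ ∀ p : ℕ, p.Prime → p ∣ d → p ∣ q} =
      Nat.factoredNumbers q.primeFactors := by
    ext d
    simp only [Set.mem_setOf_eq, Nat.factoredNumbers, Nat.mem_primeFactors]
    constructor
    · rintro ⟨hd, h⟩
      refine ⟨hd.ne', fun p hp ↦ ?_⟩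
      have hpp := Nat.prime_of_mem_primeFactorsList hp
      exact ⟨hpp, h p hpp (Nat.dvd_of_mem_primeFactorsList hp), hq.ne'⟩
    · rintro ⟨hd, h⟩
      refine ⟨Nat.pos_of_ne_zero hd, fun p hp hpd ↦ ?_⟩
      exact (h p ((Nat.mem_primeFactorsList hd).mpr ⟨hp, hpd⟩)).2.1
  have htot : ((q : ℝ) / q.totient) = ∏ p ∈ q.primeFactors, (1 - (p : ℝ)⁻¹)⁻¹ := by
    have h := Nat.totient_eq_mul_prod_factors q
    have hφ : (0 : ℝ) < q.totient := by exact_mod_cast Nat.totient_pos.mpr hq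
    have hR : (q.totient : ℝ) = q * ∏ p ∈ q.primeFactors, (1 - (p : ℝ)⁻¹) := by
      have h2 := congrArg (fun x : ℚ => (x : ℝ)) h
      push_cast at h2
      exact h2
    have hprod : (0 : ℝ) < ∏ p ∈ q.primeFactors, (1 - (p : ℝ)⁻¹) := by
      apply Finset.prod_pos
      intro p hp
      have h2 : (2 : ℝ) ≤ p := by exact_mod_cast (hs p hp).two_le
      have : (p : ℝ)⁻¹ < 1 := by rw [inv_lt_one_iff₀]; right; linarith
      linarith
    rw [Finset.prod_inv_distrib, div_eq_iff hφ.ne', hR]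
    rw [inv_mul_eq_div, mul_div_assoc, div_self hprod.ne', mul_one]
  rw [htot]
  calc ∑' d : {d : ℕ // 0 < d ∧ ∀ p : ℕ, p.Prime → p ∣ d → p ∣ q},
        Real.log (d : ℕ) / (d : ℕ)
      = ∑' d : ℕ, Set.indicator {d : ℕ | 0 < d ∧ ∀ p : ℕ, p.Prime → p ∣ d → p ∣ q}
          (fun d : ℕ ↦ Real.log d / d) d :=
        _root_.tsum_subtype {d : ℕ | 0 < d ∧ ∀ p : ℕ, p.Prime → p ∣ d → p ∣ q}
          (fun d : ℕ ↦ Real.log d / d)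
    _ = ∑' d : Nat.factoredNumbers q.primeFactors, Real.log (d : ℕ) / ((d : ℕ) : ℝ) := by
        rw [hset]; exact (_root_.tsum_subtype _ _).symm
    _ = _ := hkey.tsum_eq
end

section
/- For every positive integer q and real X > 0, ∑_{d | q^∞} (1/d)(log(X/d) - γ) = (q/φ(q)) (log X - γ - ∑_{p | q} log(p)/(p-1)), where γ is the Euler–Mascheroni constant. -/
set_option maxHeartbeats 1000000

open Nat Real

lemma factored_key (S : Finset ℕ) (hS : ∀ p ∈ S, p.Prime) :
    Summable (fun d : Nat.factoredNumbers S => 1 / ((d : ℕ) : ℝ)) ∧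
    Summable (fun d : Nat.factoredNumbers S => Real.log (d : ℕ) / ((d : ℕ) : ℝ)) ∧
    ∀ c : ℝ, ∑' d : Nat.factoredNumbers S, (1 / ((d : ℕ) : ℝ)) * (c - Real.log (d : ℕ)) =
      (∏ p ∈ S, (p : ℝ) / ((p : ℝ) - 1)) * (c - ∑ p ∈ S, Real.log p / ((p : ℝ) - 1)) := by
  induction S using Finset.induction_on with
  | empty =>
      rw [Nat.factoredNumbers_empty]
      haveI : Finite (({1} : Set ℕ)) := Set.finite_singleton 1
      refine ⟨Summable.of_finite, Summable.of_finite, fun c => ?_⟩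
      rw [tsum_singleton 1 (fun n : ℕ => (1 / (n : ℝ)) * (c - Real.log n))]
      simp
  | @insert a s ha IH =>
      have hp : a.Prime := hS a (Finset.mem_insert_self a s)
      have hs' : ∀ p ∈ s, p.Prime := fun p h => hS p (Finset.mem_insert_of_mem h)
      obtain ⟨h1, h2, h3⟩ := IH hs'
      have hp2 : (2 : ℝ) ≤ a := by exact_mod_cast hp.two_le
      have ha0 : (a : ℝ) ≠ 0 := by positivity
      have ha1 : (a : ℝ) - 1 ≠ 0 := by nlinarith
      have hr0 : (0 : ℝ) ≤ (a : ℝ)⁻¹ := by positivity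
      have hr1 : (a : ℝ)⁻¹ < 1 := by
        rw [inv_lt_one_iff₀]; right; linarith
      have hrn : ‖((a : ℝ))⁻¹‖ < 1 := by rwa [Real.norm_eq_abs, abs_of_nonneg hr0]
      have hgeom : Summable (fun e : ℕ => ((a : ℝ)⁻¹) ^ e) :=
        summable_geometric_of_lt_one hr0 hr1
      have hgeom' : Summable (fun e : ℕ => (e : ℝ) * ((a : ℝ)⁻¹) ^ e) := by
        simpa using summable_pow_mul_geometric_of_norm_lt_one 1 hrn
      have hn1 : ∀ n : Nat.factoredNumbers s, (1 : ℝ) ≤ ((n : ℕ) : ℝ) := by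
        intro n
        exact_mod_cast Nat.one_le_iff_ne_zero.mpr n.2.1
      have hnlog : ∀ n : Nat.factoredNumbers s, 0 ≤ Real.log (n : ℕ) / ((n : ℕ) : ℝ) :=
        fun n => div_nonneg (Real.log_nonneg (hn1 n)) (by linarith [hn1 n])
      -- the three product-type summable functions
      have sA : Summable (fun x : ℕ × Nat.factoredNumbers s =>
          ((a : ℝ)⁻¹) ^ x.1 * (1 / ((x.2 : ℕ) : ℝ))) :=
        hgeom.mul_of_nonneg h1 (fun e => by positivity) (fun n => by positivity)
      have sB : Summable (fun x : ℕ × Nat.factoredNumbers s =>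
          ((x.1 : ℝ) * ((a : ℝ)⁻¹) ^ x.1) * (1 / ((x.2 : ℕ) : ℝ))) :=
        hgeom'.mul_of_nonneg h1 (fun e => by positivity) (fun n => by positivity)
      have sC : Summable (fun x : ℕ × Nat.factoredNumbers s =>
          ((a : ℝ)⁻¹) ^ x.1 * (Real.log (x.2 : ℕ) / ((x.2 : ℕ) : ℝ))) :=
        hgeom.mul_of_nonneg h2 (fun e => by positivity) hnlog
      have hcoe : ∀ x : ℕ × Nat.factoredNumbers s,
          (((Nat.equivProdNatFactoredNumbers hp ha x : ℕ)) : ℝ)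
            = (a : ℝ) ^ x.1 * ((x.2 : ℕ) : ℝ) := by
        intro x
        rw [Nat.equivProdNatFactoredNumbers_apply']
        push_cast; ring
      have hcoe0 : ∀ x : ℕ × Nat.factoredNumbers s, ((x.2 : ℕ) : ℝ) ≠ 0 :=
        fun x => by have := hn1 x.2; linarith
      have hinv : ∀ x : ℕ × Nat.factoredNumbers s,
          1 / (((Nat.equivProdNatFactoredNumbers hp ha x : ℕ)) : ℝ)
            = ((a : ℝ)⁻¹) ^ x.1 * (1 / ((x.2 : ℕ) : ℝ)) := by
        intro x
        rw [hcoe x, one_div, mul_inv, inv_pow, one_div]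
      have hlogE : ∀ x : ℕ × Nat.factoredNumbers s,
          Real.log ((Nat.equivProdNatFactoredNumbers hp ha x : ℕ))
            = x.1 * Real.log a + Real.log (x.2 : ℕ) := by
        intro x
        rw [hcoe x, Real.log_mul (by positivity) (hcoe0 x), Real.log_pow]
      -- summability over insert
      have S1 : Summable (fun d : Nat.factoredNumbers (insert a s) => 1 / ((d : ℕ) : ℝ)) := by
        rw [← Equiv.summable_iff (Nat.equivProdNatFactoredNumbers hp ha)]
        exact sA.congr fun x => (hinv x).symm
      have S2 : Summable (fun d : Nat.factoredNumbers (insert a s) =>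
          Real.log (d : ℕ) / ((d : ℕ) : ℝ)) := by
        rw [← Equiv.summable_iff (Nat.equivProdNatFactoredNumbers hp ha)]
        refine ((sB.mul_left (Real.log a)).add sC).congr fun x => ?_
        simp only [Function.comp_apply]
        rw [hlogE x, hcoe x]
        have h2' := hcoe0 x
        have h3' : ((x.2 : ℕ) : ℝ) ≠ 0 := h2'
        field_simp
        have hk : ((1 : ℝ) / a) ^ x.1 * (a : ℝ) ^ x.1 = 1 := by
          rw [← mul_pow, one_div, inv_mul_cancel₀ ha0, one_pow]
        linear_combination (Real.log a * x.1 + Real.log ((x.2 : ℕ) : ℝ)) * hk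
      refine ⟨S1, S2, fun c => ?_⟩
      -- the tsum computation
      have hsum_c : ∀ c' : ℝ, Summable (fun n : Nat.factoredNumbers s =>
          (1 / ((n : ℕ) : ℝ)) * (c' - Real.log (n : ℕ))) := by
        intro c'
        refine ((h1.mul_left c').sub h2).congr fun n => ?_
        ring
      set P := ∏ p ∈ s, (p : ℝ) / ((p : ℝ) - 1) with hP
      set L := ∑ p ∈ s, Real.log p / ((p : ℝ) - 1) with hL
      have hGsum : Summable (fun x : ℕ × Nat.factoredNumbers s =>
          ((a : ℝ)⁻¹) ^ x.1 * ((1 / ((x.2 : ℕ) : ℝ))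
            * ((c - x.1 * Real.log a) - Real.log (x.2 : ℕ)))) := by
        refine (((sA.mul_left c).sub (sB.mul_left (Real.log a))).sub sC).congr fun x => ?_
        have h2' := hcoe0 x
        field_simp
      have step1 : ∑' d : Nat.factoredNumbers (insert a s),
          (1 / ((d : ℕ) : ℝ)) * (c - Real.log (d : ℕ))
          = ∑' x : ℕ × Nat.factoredNumbers s, ((a : ℝ)⁻¹) ^ x.1 * ((1 / ((x.2 : ℕ) : ℝ))
            * ((c - x.1 * Real.log a) - Real.log (x.2 : ℕ))) := by
        rw [← Equiv.tsum_eq (Nat.equivProdNatFactoredNumbers hp ha)]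
        refine tsum_congr fun x => ?_
        rw [hinv x, hlogE x]
        ring
      calc ∑' d : Nat.factoredNumbers (insert a s),
            (1 / ((d : ℕ) : ℝ)) * (c - Real.log (d : ℕ))
          = ∑' x : ℕ × Nat.factoredNumbers s, ((a : ℝ)⁻¹) ^ x.1 * ((1 / ((x.2 : ℕ) : ℝ))
              * ((c - x.1 * Real.log a) - Real.log (x.2 : ℕ))) := step1
        _ = ∑' (e : ℕ), ∑' (n : Nat.factoredNumbers s), ((a : ℝ)⁻¹) ^ e * ((1 / ((n : ℕ) : ℝ))
              * ((c - e * Real.log a) - Real.log (n : ℕ))) :=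
            Summable.tsum_prod' hGsum (fun e => (hsum_c (c - e * Real.log a)).mul_left (((a : ℝ)⁻¹) ^ e))
        _ = ∑' (e : ℕ), ((P * (c - L)) * ((a : ℝ)⁻¹) ^ e
              - (P * Real.log a) * ((e : ℝ) * ((a : ℝ)⁻¹) ^ e)) := by
            refine tsum_congr fun e => ?_
            rw [tsum_mul_left, h3 (c - e * Real.log a)]
            ring
        _ = (P * (c - L)) * ∑' (e : ℕ), ((a : ℝ)⁻¹) ^ e
              - (P * Real.log a) * ∑' (e : ℕ), ((e : ℝ) * ((a : ℝ)⁻¹) ^ e) := by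
            rw [Summable.tsum_sub (hgeom.mul_left _) (hgeom'.mul_left _), tsum_mul_left, tsum_mul_left]
        _ = (∏ p ∈ insert a s, (p : ℝ) / ((p : ℝ) - 1)) *
              (c - ∑ p ∈ insert a s, Real.log p / ((p : ℝ) - 1)) := by
            rw [tsum_geometric_of_lt_one hr0 hr1, tsum_coe_mul_geometric_of_norm_lt_one hrn,
              Finset.prod_insert ha, Finset.sum_insert ha, ← hP, ← hL]
            have h1a : (1 : ℝ) - (a : ℝ)⁻¹ ≠ 0 := by
              rw [sub_ne_zero]
              intro h
              rw [← h] at hr1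
              exact lt_irrefl _ hr1
            field_simp
            ring

theorem stmt_3 (q : ℕ) (hq : 0 < q) (X : ℝ) (hX : 0 < X) :
    ∑' d : {d : ℕ // 0 < d ∧ ∀ p : ℕ, p.Prime → p ∣ d → p ∣ q},
        (1 / ((d : ℕ) : ℝ)) * (Real.log (X / (d : ℕ)) - Real.eulerMascheroniConstant) =
      ((q : ℝ) / q.totient) *
        (Real.log X - Real.eulerMascheroniConstant -
          ∑ p ∈ q.primeFactors, Real.log p / (p - 1)) := by
  set c := Real.log X - Real.eulerMascheroniConstant with hc
  have hiff : ∀ d : ℕ, (0 < d ∧ ∀ p : ℕ, p.Prime → p ∣ d → p ∣ q) ↔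
      d ∈ Nat.factoredNumbers q.primeFactors := by
    intro d
    constructor
    · rintro ⟨hd, h⟩
      rw [Nat.mem_factoredNumbers']
      intro p pp pd
      exact Nat.mem_primeFactors.mpr ⟨pp, h p pp pd, hq.ne'⟩
    · intro h
      rw [Nat.mem_factoredNumbers_iff_primeFactors_subset] at h
      refine ⟨Nat.pos_of_ne_zero h.1, fun p pp pd => ?_⟩
      exact (Nat.mem_primeFactors.mp (h.2 (Nat.mem_primeFactors.mpr ⟨pp, pd, h.1⟩))).2.1
  have key := (factored_key q.primeFactors (fun p hp => Nat.prime_of_mem_primeFactors hp)).2.2 c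
  have htot : (q.totient : ℝ) ≠ 0 := by
    exact_mod_cast (Nat.totient_pos.mpr hq).ne'
  have hden : ∀ p ∈ q.primeFactors, ((p : ℝ) - 1) ≠ 0 := by
    intro p hp
    have : (2 : ℝ) ≤ p := by exact_mod_cast (Nat.prime_of_mem_primeFactors hp).two_le
    linarith
  have hPq : ∏ p ∈ q.primeFactors, (p : ℝ) / ((p : ℝ) - 1) = (q : ℝ) / q.totient := by
    have hc2 := congrArg (Nat.cast : ℕ → ℝ) (Nat.totient_mul_prod_primeFactors q)
    push_cast at hc2
    have hprod : ∀ p ∈ q.primeFactors, (((p - 1 : ℕ)) : ℝ) = (p : ℝ) - 1 := by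
      intro p hp
      rw [Nat.cast_sub (Nat.prime_of_mem_primeFactors hp).one_lt.le, Nat.cast_one]
    rw [Finset.prod_congr rfl hprod] at hc2
    have hdne : ∏ p ∈ q.primeFactors, ((p : ℝ) - 1) ≠ 0 :=
      Finset.prod_ne_zero_iff.mpr hden
    rw [Finset.prod_div_distrib, div_eq_div_iff hdne htot]
    linear_combination hc2
  calc ∑' d : {d : ℕ // 0 < d ∧ ∀ p : ℕ, p.Prime → p ∣ d → p ∣ q},
        (1 / ((d : ℕ) : ℝ)) * (Real.log (X / (d : ℕ)) - Real.eulerMascheroniConstant)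
      = ∑' d : {d : ℕ // 0 < d ∧ ∀ p : ℕ, p.Prime → p ∣ d → p ∣ q},
        (1 / ((d : ℕ) : ℝ)) * (c - Real.log (d : ℕ)) := by
        refine tsum_congr fun d => ?_
        have hd0 : ((d : ℕ) : ℝ) ≠ 0 := by
          exact_mod_cast d.2.1.ne'
        rw [Real.log_div hX.ne' hd0, hc]
        ring
    _ = ∑' d : Nat.factoredNumbers q.primeFactors,
        (1 / ((d : ℕ) : ℝ)) * (c - Real.log (d : ℕ)) :=
        Equiv.tsum_eq (Equiv.subtypeEquivRight hiff)
          (fun d : Nat.factoredNumbers q.primeFactors =>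
            (1 / ((d : ℕ) : ℝ)) * (c - Real.log (d : ℕ)))
    _ = (∏ p ∈ q.primeFactors, (p : ℝ) / ((p : ℝ) - 1)) *
        (c - ∑ p ∈ q.primeFactors, Real.log p / ((p : ℝ) - 1)) := key
    _ = ((q : ℝ) / q.totient) *
        (Real.log X - Real.eulerMascheroniConstant -
          ∑ p ∈ q.primeFactors, Real.log p / (p - 1)) := by
        rw [hPq, hc]
end

section
/- Let X, Z, m, n be real numbers with m > 1, n > 0, and 1 ≤ Z < X. Then ∫_1^Z du/(u^m log^n(X/u)) ≤ (1/(m-1)) (1/log^n(X/√Z) + 1/(log^n(X/Z) √(Z^{m-1}))). -/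
open Real intervalIntegral Set

private lemma cont_aux (X m n a b : ℝ) (ha : 0 < a) (hbX : b < X) :
    ContinuousOn (fun u : ℝ => 1 / (u ^ m * Real.log (X / u) ^ n)) (Set.Icc a b) := by
  have hpos : ∀ u ∈ Set.Icc a b, 0 < u := fun u hu => lt_of_lt_of_le ha hu.1
  have hlog : ∀ u ∈ Set.Icc a b, 0 < Real.log (X / u) := by
    intro u hu
    exact Real.log_pos ((one_lt_div (hpos u hu)).mpr (lt_of_le_of_lt hu.2 hbX))
  apply ContinuousOn.div continuousOn_const
  · apply ContinuousOn.mul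
    · exact ContinuousOn.rpow_const continuousOn_id
        (fun u hu => Or.inl (hpos u hu).ne')
    · apply ContinuousOn.rpow_const
      · apply ContinuousOn.log
        · exact continuousOn_const.div continuousOn_id (fun u hu => (hpos u hu).ne')
        · exact fun u hu =>
            (div_pos (lt_trans (hpos u hu) (lt_of_le_of_lt hu.2 hbX)) (hpos u hu)).ne'
      · exact fun u hu => Or.inl (hlog u hu).ne'
  · intro u hu
    exact (mul_pos (Real.rpow_pos_of_pos (hpos u hu) m)
      (Real.rpow_pos_of_pos (hlog u hu) n)).ne'

private lemma piece_aux (X m n a b : ℝ) (hm : 1 < m) (hn : 0 < n)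
    (ha : 0 < a) (hab : a ≤ b) (hbX : b < X) :
    ∫ u in a..b, 1 / (u ^ m * Real.log (X / u) ^ n) ≤
      a ^ (1 - m) / ((m - 1) * Real.log (X / b) ^ n) := by
  have hb0 : 0 < b := lt_of_lt_of_le ha hab
  have hX0 : 0 < X := lt_trans hb0 hbX
  have hlb : 0 < Real.log (X / b) := Real.log_pos ((one_lt_div hb0).mpr hbX)
  have hlbn : 0 < Real.log (X / b) ^ n := Real.rpow_pos_of_pos hlb n
  have huIcc : Set.uIcc a b = Set.Icc a b := Set.uIcc_of_le hab
  have hpos : ∀ u ∈ Set.Icc a b, 0 < u := fun u hu => lt_of_lt_of_le ha hu.1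
  have hint1 : IntervalIntegrable (fun u : ℝ => 1 / (u ^ m * Real.log (X / u) ^ n))
      MeasureTheory.volume a b := by
    apply ContinuousOn.intervalIntegrable
    rw [huIcc]; exact cont_aux X m n a b ha hbX
  have hint2 : IntervalIntegrable
      (fun u : ℝ => (1 / Real.log (X / b) ^ n) * u ^ (-m)) MeasureTheory.volume a b := by
    apply ContinuousOn.intervalIntegrable
    rw [huIcc]
    exact continuousOn_const.mul (ContinuousOn.rpow_const continuousOn_id
      (fun u hu => Or.inl (hpos u hu).ne'))
  have hmono : ∫ u in a..b, 1 / (u ^ m * Real.log (X / u) ^ n) ≤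
      ∫ u in a..b, (1 / Real.log (X / b) ^ n) * u ^ (-m) := by
    apply intervalIntegral.integral_mono_on hab hint1 hint2
    intro u hu
    have hu0 : 0 < u := hpos u hu
    have hum : 0 < u ^ m := Real.rpow_pos_of_pos hu0 m
    have hdivle : X / b ≤ X / u := div_le_div_of_nonneg_left hX0.le hu0 hu.2
    have hlogle : Real.log (X / b) ≤ Real.log (X / u) :=
      Real.log_le_log (div_pos hX0 hb0) hdivle
    calc 1 / (u ^ m * Real.log (X / u) ^ n)
        ≤ 1 / (u ^ m * Real.log (X / b) ^ n) := by
          apply one_div_le_one_div_of_le (mul_pos hum hlbn)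
          exact mul_le_mul_of_nonneg_left
            (Real.rpow_le_rpow hlb.le hlogle hn.le) hum.le
      _ = (1 / Real.log (X / b) ^ n) * u ^ (-m) := by
          rw [Real.rpow_neg hu0.le]; ring
  have hrpow : ∫ u in a..b, u ^ (-m) = (b ^ (-m + 1) - a ^ (-m + 1)) / (-m + 1) := by
    apply integral_rpow
    refine Or.inr ⟨by intro h; nlinarith, ?_⟩
    rw [huIcc]; intro h; exact absurd h.1 (not_le.mpr ha)
  have heq : ∫ u in a..b, (1 / Real.log (X / b) ^ n) * u ^ (-m) =
      (a ^ (1 - m) - b ^ (1 - m)) / ((m - 1) * Real.log (X / b) ^ n) := by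
    have hm1 : m - 1 ≠ 0 := by intro h; nlinarith
    have h1m : (1:ℝ) - m ≠ 0 := by intro h; nlinarith
    rw [intervalIntegral.integral_const_mul, hrpow,
      show -m + 1 = 1 - m by ring, eq_div_iff (mul_ne_zero hm1 hlbn.ne')]
    field_simp
    ring
  have hb1m : 0 ≤ b ^ (1 - m) := Real.rpow_nonneg hb0.le _
  calc ∫ u in a..b, 1 / (u ^ m * Real.log (X / u) ^ n)
      ≤ (a ^ (1 - m) - b ^ (1 - m)) / ((m - 1) * Real.log (X / b) ^ n) := by
        rw [← heq]; exact hmono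
    _ ≤ a ^ (1 - m) / ((m - 1) * Real.log (X / b) ^ n) := by
        have hden : 0 < (m - 1) * Real.log (X / b) ^ n :=
          mul_pos (by linarith) hlbn
        exact (div_le_div_iff_of_pos_right hden).mpr (sub_le_self _ hb1m)

theorem stmt_10 (X Z m n : ℝ) (hm : 1 < m) (hn : 0 < n) (hZ : 1 ≤ Z) (hZX : Z < X) :
    ∫ u in (1:ℝ)..Z, 1 / (u ^ m * Real.log (X / u) ^ n) ≤
      (1 / (m - 1)) *
        (1 / Real.log (X / Real.sqrt Z) ^ n +
          1 / (Real.log (X / Z) ^ n * Real.sqrt (Z ^ (m - 1)))) := by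
  set s := Real.sqrt Z with hs
  have hZ0 : (0:ℝ) < Z := lt_of_lt_of_le one_pos hZ
  have hs1 : 1 ≤ s := by
    rw [hs, show (1:ℝ) = Real.sqrt 1 by simp]
    exact Real.sqrt_le_sqrt hZ
  have hs0 : 0 < s := lt_of_lt_of_le one_pos hs1
  have hsZ : s ≤ Z := (Real.sqrt_le_left hZ0.le).mpr (by nlinarith)
  have hsX : s < X := lt_of_le_of_lt hsZ hZX
  have hi1 : IntervalIntegrable (fun u : ℝ => 1 / (u ^ m * Real.log (X / u) ^ n))
      MeasureTheory.volume 1 s := by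
    apply ContinuousOn.intervalIntegrable
    rw [Set.uIcc_of_le hs1]
    exact cont_aux X m n 1 s one_pos hsX
  have hi2 : IntervalIntegrable (fun u : ℝ => 1 / (u ^ m * Real.log (X / u) ^ n))
      MeasureTheory.volume s Z := by
    apply ContinuousOn.intervalIntegrable
    rw [Set.uIcc_of_le hsZ]
    exact cont_aux X m n s Z hs0 hZX
  have hsplit : ∫ u in (1:ℝ)..Z, 1 / (u ^ m * Real.log (X / u) ^ n) =
      (∫ u in (1:ℝ)..s, 1 / (u ^ m * Real.log (X / u) ^ n)) +
      ∫ u in s..Z, 1 / (u ^ m * Real.log (X / u) ^ n) :=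
    (intervalIntegral.integral_add_adjacent_intervals hi1 hi2).symm
  have h1 := piece_aux X m n 1 s hm hn one_pos hs1 hsX
  have h2 := piece_aux X m n s Z hm hn hs0 hsZ hZX
  rw [Real.one_rpow] at h1
  -- identities for the powers of s
  have hkey : Real.sqrt (Z ^ (m - 1)) = s ^ (m - 1) := by
    rw [hs, Real.sqrt_eq_rpow, Real.sqrt_eq_rpow, ← Real.rpow_mul hZ0.le,
      ← Real.rpow_mul hZ0.le, mul_comm]
  have hsinv : s ^ (1 - m) = (s ^ (m - 1))⁻¹ := by
    rw [show (1 - m) = -(m - 1) by ring, Real.rpow_neg hs0.le]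
  have hc1 : 0 < Real.log (X / s) ^ n :=
    Real.rpow_pos_of_pos (Real.log_pos ((one_lt_div hs0).mpr hsX)) n
  have hc2 : 0 < Real.log (X / Z) ^ n :=
    Real.rpow_pos_of_pos (Real.log_pos ((one_lt_div hZ0).mpr hZX)) n
  have ht : 0 < s ^ (m - 1) := Real.rpow_pos_of_pos hs0 _
  have hrhs : (1 / (m - 1)) *
        (1 / Real.log (X / s) ^ n +
          1 / (Real.log (X / Z) ^ n * Real.sqrt (Z ^ (m - 1)))) =
      1 / ((m - 1) * Real.log (X / s) ^ n) +
        s ^ (1 - m) / ((m - 1) * Real.log (X / Z) ^ n) := by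
    rw [hkey, hsinv]
    have hm1 : (0:ℝ) < m - 1 := by linarith
    field_simp
  rw [hsplit, hrhs]
  exact add_le_add h1 h2
end

section
/- Let q be a positive integer. Then ∑_{d ≥ 1, gcd(d,q)=1} μ²(d)/(φ(d)κ(d)) · ∑_{p | d} log(p)/(p-1) = (∑_{d ≥ 1, gcd(d,q)=1} μ²(d)/(φ(d)κ(d))) · ∑_{p prime, p ∤ q} log(p)/(p²(p-1)). -/
open ArithmeticFunction

/-- `κ(n) = n ∏_{p | n} (1 + 1/p)`. -/
noncomputable def kappa (n : ℕ) : ℝ :=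
  n * ∏ p ∈ n.primeFactors, (1 + 1 / (p : ℝ))

namespace Stmt13

noncomputable def F (d : ℕ) : ℝ :=
  if Squarefree d then ∏ p ∈ d.primeFactors, ((p : ℝ) ^ 2 - 1)⁻¹ else 0

lemma two_le_real {p : ℕ} (hp : p.Prime) : (2 : ℝ) ≤ (p : ℝ) := by
  exact_mod_cast hp.two_le

lemma factor_pos {p : ℕ} (hp : p.Prime) : 0 < ((p : ℝ) ^ 2 - 1)⁻¹ := by
  have h := two_le_real hp
  have h1 : (0:ℝ) < (p:ℝ)^2 - 1 := by nlinarith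
  exact inv_pos.mpr h1

lemma F_pos {d : ℕ} (hd : Squarefree d) : 0 < F d := by
  rw [F, if_pos hd]
  exact Finset.prod_pos fun p hp => factor_pos (Nat.prime_of_mem_primeFactors hp)

lemma F_nonneg (d : ℕ) : 0 ≤ F d := by
  by_cases hd : Squarefree d
  · exact (F_pos hd).le
  · rw [F, if_neg hd]

lemma F_ns {d : ℕ} (hd : ¬ Squarefree d) : F d = 0 := by rw [F, if_neg hd]

lemma F_mul_prime {p e : ℕ} (hp : p.Prime) (he : Squarefree e) (hpe : ¬ p ∣ e) :
    F (p * e) = ((p : ℝ) ^ 2 - 1)⁻¹ * F e := by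
  have hco : Nat.Coprime p e := (Nat.Prime.coprime_iff_not_dvd hp).mpr hpe
  have hsq : Squarefree (p * e) := by
    exact (Nat.squarefree_mul hco).mpr ⟨hp.squarefree, he⟩
  rw [F, if_pos hsq, Nat.primeFactors_mul hp.ne_zero he.ne_zero,
    Finset.prod_union (by
      rw [hp.primeFactors, Finset.disjoint_singleton_left]
      exact fun h => hpe (Nat.dvd_of_mem_primeFactors h)),
    hp.primeFactors, Finset.prod_singleton, F, if_pos he]

lemma key_ineq {x : ℝ} (hx : 2 ≤ x) : x ^ ((3:ℝ)/2) ≤ x ^ 2 - 1 := by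
  have hx0 : (0:ℝ) ≤ x := by linarith
  set s := Real.sqrt x with hs
  have hs0 : 0 ≤ s := Real.sqrt_nonneg x
  have hs2 : s ^ 2 = x := Real.sq_sqrt hx0
  have hkey : x ^ ((3:ℝ)/2) = s ^ 3 := by
    rw [hs, Real.sqrt_eq_rpow, ← Real.rpow_natCast (x ^ ((1:ℝ)/2)) 3, ← Real.rpow_mul hx0]
    norm_num
  rw [hkey, ← hs2]
  have h2 : 2 ≤ s ^ 2 := by rw [hs2]; exact hx
  nlinarith [sq_nonneg (s - 1), sq_nonneg s, sq_nonneg (s^2 - s - 1)]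

lemma F_le (d : ℕ) : F d ≤ 1 / (d : ℝ) ^ ((3:ℝ)/2) := by
  by_cases hd : Squarefree d
  · have hd0 : (0:ℝ) < (d:ℝ) := by
      exact_mod_cast Nat.pos_of_ne_zero hd.ne_zero
    have hprod : ((d : ℝ)) ^ ((3:ℝ)/2) ≤ ∏ p ∈ d.primeFactors, ((p : ℝ) ^ 2 - 1) := by
      have hd_eq : ((d : ℝ)) = ∏ p ∈ d.primeFactors, (p : ℝ) := by
        rw [← Nat.cast_prod, Nat.prod_primeFactors_of_squarefree hd]
      rw [hd_eq, ← Real.finset_prod_rpow _ _ (fun p _ => by positivity) _]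
      refine Finset.prod_le_prod (fun p _ => by positivity) fun p hp => ?_
      exact key_ineq (two_le_real (Nat.prime_of_mem_primeFactors hp))
    rw [F, if_pos hd, Finset.prod_inv_distrib, one_div]
    exact inv_anti₀ (by positivity) hprod
  · rw [F, if_neg hd]
    positivity

lemma summable_F : Summable F :=
  Summable.of_nonneg_of_le F_nonneg F_le
    (by simpa using Real.summable_one_div_nat_rpow.mpr (by norm_num : (1:ℝ) < 3/2))

lemma summable_F_ind (c : ℕ → Prop) [DecidablePred c] :
    Summable fun d => if c d then F d else 0 := by
  refine Summable.of_nonneg_of_le (fun d => ?_) (fun d => ?_) summable_F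
  · split <;> simp [F_nonneg]
  · split
    · exact le_rfl
    · exact F_nonneg d

lemma f_eq (d : ℕ) :
    ((moebius d : ℝ)) ^ 2 / (d.totient * kappa d) = F d := by
  by_cases hd : Squarefree d
  · have hd0 : d ≠ 0 := hd.ne_zero
    have hμ : ((moebius d : ℝ)) ^ 2 = 1 := by
      have := moebius_sq_eq_one_of_squarefree hd
      exact_mod_cast congrArg (fun z : ℤ => (z : ℝ)) this
    have htot : (d.totient : ℝ) = d * ∏ p ∈ d.primeFactors, (1 - (p : ℝ)⁻¹) := by
      have h := congrArg (fun z : ℚ => (z : ℝ)) (Nat.totient_eq_mul_prod_factors d)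
      push_cast at h
      exact h
    have hdprod : ((d : ℝ)) = ∏ p ∈ d.primeFactors, (p : ℝ) := by
      rw [← Nat.cast_prod, Nat.prod_primeFactors_of_squarefree hd]
    have hden : (d.totient : ℝ) * kappa d = ∏ p ∈ d.primeFactors, ((p : ℝ) ^ 2 - 1) := by
      have hexp : ∏ p ∈ d.primeFactors, ((p:ℝ) * (1 - (p : ℝ)⁻¹) * ((p:ℝ) * (1 + 1 / (p : ℝ))))
          = ((∏ p ∈ d.primeFactors, (p:ℝ)) * ∏ p ∈ d.primeFactors, (1 - (p : ℝ)⁻¹)) *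
            ((∏ p ∈ d.primeFactors, (p:ℝ)) * ∏ p ∈ d.primeFactors, (1 + 1 / (p : ℝ))) := by
        rw [Finset.prod_mul_distrib, Finset.prod_mul_distrib, Finset.prod_mul_distrib]
      rw [htot, kappa, hdprod, ← hexp]
      refine Finset.prod_congr rfl fun p hp => ?_
      have hp0 : (0:ℝ) < (p:ℝ) := by
        exact_mod_cast (Nat.prime_of_mem_primeFactors hp).pos
      field_simp
      ring
    rw [hμ, hden, F, if_pos hd, one_div, Finset.prod_inv_distrib]
  · have hμ : moebius d = 0 := moebius_eq_zero_of_not_squarefree hd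
    rw [F, if_neg hd, hμ]
    simp

lemma tsum_subtype_eq {P : ℕ → Prop} [DecidablePred P] (h : ℕ → ℝ) :
    ∑' x : {x : ℕ // P x}, h (x : ℕ) = ∑' x : ℕ, if P x then h x else 0 := by
  rw [show (∑' x : {x : ℕ // P x}, h (x : ℕ)) = ∑' x : ({x : ℕ | P x} : Set ℕ), h (x : ℕ) from rfl,
    tsum_subtype]
  exact tsum_congr fun x => by by_cases hx : P x <;> simp [Set.indicator_apply, hx]

lemma tsum_dvd (q p : ℕ) (hp : p.Prime) (hpq : ¬ p ∣ q) :
    ∑' d : ℕ, (if Nat.gcd d q = 1 ∧ p ∣ d then F d else 0)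
      = ((p : ℝ) ^ 2 - 1)⁻¹ * ∑' e : ℕ, (if Nat.gcd e (p * q) = 1 then F e else 0) := by
  rw [← tsum_mul_left]
  refine tsum_eq_tsum_of_ne_zero_bij (fun e => p * (e : ℕ)) ?_ ?_ ?_
  · intro x y hxy
    exact Subtype.ext (Nat.eq_of_mul_eq_mul_left hp.pos hxy)
  · intro d hd
    rw [Function.mem_support] at hd
    split_ifs at hd with hcond
    · obtain ⟨h1, h2⟩ := hcond
      have hsq : Squarefree d := by
        by_contra hns
        exact hd (F_ns hns)
      obtain ⟨e, rfl⟩ := h2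
      have hesq : Squarefree e := hsq.squarefree_of_dvd (dvd_mul_left e p)
      have hpe : ¬ p ∣ e := by
        intro hdvd
        obtain ⟨k, rfl⟩ := hdvd
        exact hp.not_isUnit (hsq p ⟨k, by ring⟩)
      have hce : Nat.Coprime e (p * q) := by
        refine Nat.Coprime.mul_right ?_ ?_
        · exact Nat.coprime_comm.mp ((Nat.Prime.coprime_iff_not_dvd hp).mpr hpe)
        · exact Nat.Coprime.coprime_dvd_left (dvd_mul_left e p) h1
      refine ⟨⟨e, ?_⟩, rfl⟩
      rw [Function.mem_support, if_pos hce]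
      exact mul_ne_zero (ne_of_gt (factor_pos hp)) (ne_of_gt (F_pos hesq))
    · exact absurd rfl hd
  · rintro ⟨e, he⟩
    rw [Function.mem_support] at he
    have hce : Nat.gcd e (p * q) = 1 := by
      by_contra h
      rw [if_neg h, mul_zero] at he
      exact he rfl
    rw [if_pos hce] at he
    have hFe : F e ≠ 0 := by
      intro h
      rw [h, mul_zero] at he
      exact he rfl
    have hesq : Squarefree e := by
      by_contra hns
      exact hFe (F_ns hns)
    have hcep : Nat.Coprime e p := Nat.Coprime.coprime_dvd_right (dvd_mul_right p q) hce
    have hpe : ¬ p ∣ e := (Nat.Prime.coprime_iff_not_dvd hp).mp hcep.symm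
    have hceq : Nat.Coprime e q := Nat.Coprime.coprime_dvd_right (dvd_mul_left q p) hce
    have hcpq : Nat.Coprime p q := (Nat.Prime.coprime_iff_not_dvd hp).mpr hpq
    have hcond : Nat.gcd (p * e) q = 1 ∧ p ∣ p * e :=
      ⟨Nat.Coprime.mul hcpq hceq, dvd_mul_right p e⟩
    simp only [if_pos hcond, if_pos hce]
    exact F_mul_prime hp hesq hpe

lemma G_split (q p : ℕ) (hp : p.Prime) (hpq : ¬ p ∣ q) :
    ∑' d : ℕ, (if Nat.gcd d q = 1 then F d else 0)
      = (∑' d : ℕ, (if Nat.gcd d (p * q) = 1 then F d else 0))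
        + ((p : ℝ) ^ 2 - 1)⁻¹ * ∑' e : ℕ, (if Nat.gcd e (p * q) = 1 then F e else 0) := by
  rw [← tsum_dvd q p hp hpq,
    ← Summable.tsum_add (summable_F_ind _) (summable_F_ind _)]
  refine tsum_congr fun d => ?_
  by_cases h1 : Nat.gcd d q = 1
  · by_cases h2 : p ∣ d
    · have hne : Nat.gcd d (p * q) ≠ 1 := by
        intro h
        have : p ∣ Nat.gcd d (p * q) := Nat.dvd_gcd h2 (dvd_mul_right p q)
        rw [h] at this
        exact hp.one_lt.ne' (Nat.dvd_one.mp this)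
      rw [if_pos h1, if_neg hne, if_pos ⟨h1, h2⟩, zero_add]
    · have h3 : Nat.gcd d (p * q) = 1 :=
        Nat.Coprime.mul_right ((Nat.coprime_comm).mp ((Nat.Prime.coprime_iff_not_dvd hp).mpr h2)) h1
      rw [if_pos h1, if_pos h3, if_neg (fun hc => h2 hc.2), add_zero]
  · have h3 : Nat.gcd d (p * q) ≠ 1 := fun h =>
      h1 (Nat.Coprime.coprime_dvd_right (dvd_mul_left q p) h)
    rw [if_neg h1, if_neg h3, if_neg (fun hc => h1 hc.1), add_zero]

noncomputable def W (q : ℕ) (z : ℕ × ℕ) : ℝ :=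
  if z.2.Prime ∧ ¬ z.2 ∣ q ∧ Nat.gcd z.1 q = 1 ∧ z.2 ∣ z.1 ∧ Squarefree z.1 then
    F z.1 * (Real.log z.2 / ((z.2 : ℝ) - 1)) else 0

lemma W_nonneg (q : ℕ) (z : ℕ × ℕ) : 0 ≤ W q z := by
  rw [W]
  split
  · rename_i h
    have h1 : (1:ℝ) ≤ (z.2 : ℝ) := by exact_mod_cast h.1.one_lt.le
    have hlog : (0:ℝ) ≤ Real.log z.2 := Real.log_nonneg h1
    have hz : (0:ℝ) ≤ (z.2 : ℝ) - 1 := by linarith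
    exact mul_nonneg (F_nonneg _) (div_nonneg hlog hz)
  · exact le_rfl

lemma inner_eq (q d : ℕ) :
    ∑' p : ℕ, W q (d, p)
      = (if Nat.gcd d q = 1 then
          F d * ∑ p ∈ d.primeFactors, Real.log p / ((p : ℝ) - 1) else 0) := by
  by_cases hsq : Squarefree d
  · by_cases hg : Nat.gcd d q = 1
    · rw [tsum_eq_sum (s := d.primeFactors) (f := fun p => W q (d, p)) ?_]
      · rw [if_pos hg, Finset.mul_sum]
        refine Finset.sum_congr rfl fun p hp => ?_
        have hp' := Nat.prime_of_mem_primeFactors hp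
        have hpd := Nat.dvd_of_mem_primeFactors hp
        have hpq : ¬ p ∣ q := by
          intro hdvd
          have : p ∣ Nat.gcd d q := Nat.dvd_gcd hpd hdvd
          rw [hg] at this
          exact hp'.one_lt.ne' (Nat.dvd_one.mp this)
        simp only [W]
        rw [if_pos ⟨hp', hpq, hg, hpd, hsq⟩]
      · intro p hp
        simp only [W]
        refine if_neg fun hc => hp ?_
        exact Nat.mem_primeFactors.mpr ⟨hc.1, hc.2.2.2.1, hsq.ne_zero⟩
    · rw [if_neg hg]
      rw [tsum_congr (fun p : ℕ => show W q (d, p) = 0 by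
        simp only [W]; exact if_neg fun hc => hg hc.2.2.1)]
      exact tsum_zero
  · rw [tsum_congr (fun p : ℕ => show W q (d, p) = 0 by
      simp only [W]; exact if_neg fun hc => hsq hc.2.2.2.2)]
    rw [tsum_zero]
    split
    · rw [F_ns hsq, zero_mul]
    · rfl

lemma summable_fiber (q d : ℕ) : Summable fun p => W q (d, p) := by
  refine summable_of_ne_finset_zero (s := d.primeFactors) fun p hp => ?_
  by_cases hsq : Squarefree d
  · simp only [W]
    exact if_neg fun hc => hp (Nat.mem_primeFactors.mpr ⟨hc.1, hc.2.2.2.1, hsq.ne_zero⟩)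
  · simp only [W]
    exact if_neg fun hc => hsq hc.2.2.2.2

lemma gsum_nonneg (d : ℕ) : 0 ≤ ∑ p ∈ d.primeFactors, Real.log p / ((p : ℝ) - 1) := by
  refine Finset.sum_nonneg fun p hp => ?_
  have h2 : (2:ℝ) ≤ (p:ℝ) := by exact_mod_cast (Nat.prime_of_mem_primeFactors hp).two_le
  exact div_nonneg (Real.log_nonneg (by linarith)) (by linarith)

lemma gsum_le (d : ℕ) (hd : d ≠ 0) :
    ∑ p ∈ d.primeFactors, Real.log p / ((p : ℝ) - 1) ≤ Real.log d := by
  have h1 : ∑ p ∈ d.primeFactors, Real.log p / ((p : ℝ) - 1)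
      ≤ ∑ p ∈ d.primeFactors, Real.log p := by
    refine Finset.sum_le_sum fun p hp => ?_
    have h2 : (2:ℝ) ≤ (p:ℝ) := by exact_mod_cast (Nat.prime_of_mem_primeFactors hp).two_le
    have hlog : (0:ℝ) ≤ Real.log p := Real.log_nonneg (by linarith)
    calc Real.log p / ((p:ℝ) - 1) ≤ Real.log p / 1 := by
          apply div_le_div_of_nonneg_left hlog (by linarith) (by linarith)
      _ = Real.log p := div_one _
  refine h1.trans ?_
  rw [← Real.log_prod (fun p hp => by
      exact_mod_cast (Nat.prime_of_mem_primeFactors hp).pos.ne')]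
  have hle : (∏ p ∈ d.primeFactors, p) ≤ d :=
    Nat.le_of_dvd (Nat.pos_of_ne_zero hd) (Nat.prod_primeFactors_dvd d)
  have hpos : 0 < ∏ p ∈ d.primeFactors, p :=
    Finset.prod_pos fun p hp => (Nat.prime_of_mem_primeFactors hp).pos
  refine Real.log_le_log ?_ ?_
  · rw [← Nat.cast_prod]
    exact_mod_cast hpos
  · rw [← Nat.cast_prod]
    exact_mod_cast hle

lemma log_le_rpow (d : ℕ) (hd : d ≠ 0) : Real.log d ≤ 4 * (d : ℝ) ^ ((1:ℝ)/4) := by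
  have hd0 : (0:ℝ) < (d:ℝ) := by exact_mod_cast Nat.pos_of_ne_zero hd
  have h1 : Real.log ((d:ℝ) ^ ((1:ℝ)/4)) = (1/4) * Real.log d := Real.log_rpow hd0 _
  have h2 : Real.log ((d:ℝ) ^ ((1:ℝ)/4)) ≤ (d:ℝ) ^ ((1:ℝ)/4) - 1 :=
    Real.log_le_sub_one_of_pos (Real.rpow_pos_of_pos hd0 _)
  nlinarith [Real.rpow_pos_of_pos hd0 ((1:ℝ)/4)]

lemma summable_ind_mul (q : ℕ) :
    Summable fun d : ℕ => (if Nat.gcd d q = 1 then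
      F d * ∑ p ∈ d.primeFactors, Real.log p / ((p : ℝ) - 1) else 0) := by
  have hb : Summable fun d : ℕ => 4 * (1 / (d : ℝ) ^ ((5:ℝ)/4)) :=
    (Real.summable_one_div_nat_rpow.mpr (by norm_num : (1:ℝ) < 5/4)).mul_left 4
  refine Summable.of_nonneg_of_le (fun d => ?_) (fun d => ?_) hb
  · split
    · exact mul_nonneg (F_nonneg d) (gsum_nonneg d)
    · exact le_rfl
  · have hrpos : 0 ≤ 4 * (1 / (d : ℝ) ^ ((5:ℝ)/4)) := by positivity
    split
    · rcases Nat.eq_zero_or_pos d with rfl | hd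
      · rw [F_ns (by simp), zero_mul]
        exact hrpos
      · have hd0 : (0:ℝ) < (d:ℝ) := by exact_mod_cast hd
        have h1 : F d * (∑ p ∈ d.primeFactors, Real.log p / ((p : ℝ) - 1))
            ≤ (1 / (d : ℝ) ^ ((3:ℝ)/2)) * (4 * (d : ℝ) ^ ((1:ℝ)/4)) := by
          refine mul_le_mul (F_le d) ((gsum_le d hd.ne').trans (log_le_rpow d hd.ne'))
            (gsum_nonneg d) (by positivity)
        refine h1.trans (le_of_eq ?_)
        have hmul : (d:ℝ) ^ ((5:ℝ)/4) * (d:ℝ) ^ ((1:ℝ)/4) = (d:ℝ) ^ ((3:ℝ)/2) := by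
          rw [← Real.rpow_add hd0]; norm_num
        have h32 : (d:ℝ) ^ ((3:ℝ)/2) ≠ 0 := (Real.rpow_pos_of_pos hd0 _).ne'
        have h54 : (d:ℝ) ^ ((5:ℝ)/4) ≠ 0 := (Real.rpow_pos_of_pos hd0 _).ne'
        field_simp
        linear_combination hmul
    · exact hrpos

lemma summable_W (q : ℕ) : Summable (W q) := by
  refine (summable_prod_of_nonneg (fun z => W_nonneg q z)).mpr ⟨fun d => summable_fiber q d, ?_⟩
  exact (summable_congr fun d => inner_eq q d).mpr (summable_ind_mul q)

lemma tsum_W_eq (q p : ℕ) :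
    ∑' d : ℕ, W q (d, p)
      = (∑' d : ℕ, (if Nat.gcd d q = 1 then F d else 0)) *
        (if p.Prime ∧ ¬ p ∣ q then Real.log p / ((p : ℝ) ^ 2 * ((p : ℝ) - 1)) else 0) := by
  by_cases hp : p.Prime ∧ ¬ p ∣ q
  · obtain ⟨hp1, hp2⟩ := hp
    have hterm : ∀ d : ℕ, W q (d, p)
        = (Real.log p / ((p : ℝ) - 1)) * (if Nat.gcd d q = 1 ∧ p ∣ d then F d else 0) := by
      intro d
      simp only [W]
      by_cases hc : Nat.gcd d q = 1 ∧ p ∣ d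
      · by_cases hsq : Squarefree d
        · rw [if_pos ⟨hp1, hp2, hc.1, hc.2, hsq⟩, if_pos hc]
          ring
        · rw [if_neg (fun h => hsq h.2.2.2.2), if_pos hc, F_ns hsq, mul_zero]
      · rw [if_neg (fun h => hc ⟨h.2.2.1, h.2.2.2.1⟩), if_neg hc, mul_zero]
    rw [tsum_congr hterm, tsum_mul_left, tsum_dvd q p hp1 hp2, if_pos ⟨hp1, hp2⟩,
      G_split q p hp1 hp2]
    have h2 : (2:ℝ) ≤ (p:ℝ) := two_le_real hp1
    have hne1 : (p:ℝ) - 1 ≠ 0 := by nlinarith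
    have hne2 : (p:ℝ) ^ 2 - 1 ≠ 0 := by nlinarith
    have hne3 : (p:ℝ) ≠ 0 := by nlinarith
    field_simp
    ring
  · rw [if_neg hp, mul_zero]
    rw [tsum_congr fun d : ℕ => show W q (d, p) = 0 by
      simp only [W]; exact if_neg fun h => hp ⟨h.1, h.2.1⟩]
    exact tsum_zero

end Stmt13

open Stmt13 in
theorem stmt_13 (q : ℕ) (hq : 0 < q) :
    ∑' d : {d : ℕ // Nat.gcd d q = 1},
        ((moebius (d : ℕ) : ℝ)) ^ 2 / ((d : ℕ).totient * kappa (d : ℕ)) *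
          ∑ p ∈ (d : ℕ).primeFactors, Real.log p / ((p : ℝ) - 1) =
      (∑' d : {d : ℕ // Nat.gcd d q = 1},
          ((moebius (d : ℕ) : ℝ)) ^ 2 / ((d : ℕ).totient * kappa (d : ℕ))) *
        ∑' p : {p : ℕ // p.Prime ∧ ¬ p ∣ q},
          Real.log (p : ℕ) / (((p : ℕ) : ℝ) ^ 2 * ((p : ℕ) - 1)) := by
  have hL : ∑' d : {d : ℕ // Nat.gcd d q = 1},
      ((moebius (d : ℕ) : ℝ)) ^ 2 / ((d : ℕ).totient * kappa (d : ℕ)) *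
        ∑ p ∈ (d : ℕ).primeFactors, Real.log p / ((p : ℝ) - 1)
      = ∑' d : ℕ, (if Nat.gcd d q = 1 then
          F d * ∑ p ∈ d.primeFactors, Real.log p / ((p : ℝ) - 1) else 0) := by
    rw [tsum_subtype_eq (P := fun d => Nat.gcd d q = 1)
      (fun d => ((moebius d : ℝ)) ^ 2 / (d.totient * kappa d) *
        ∑ p ∈ d.primeFactors, Real.log p / ((p : ℝ) - 1))]
    exact tsum_congr fun d => by rw [f_eq d]
  have hF : (∑' d : {d : ℕ // Nat.gcd d q = 1},
      ((moebius (d : ℕ) : ℝ)) ^ 2 / ((d : ℕ).totient * kappa (d : ℕ)))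
      = ∑' d : ℕ, (if Nat.gcd d q = 1 then F d else 0) := by
    rw [tsum_subtype_eq (P := fun d => Nat.gcd d q = 1)
      (fun d => ((moebius d : ℝ)) ^ 2 / (d.totient * kappa d))]
    exact tsum_congr fun d => by rw [f_eq d]
  have hP : (∑' p : {p : ℕ // p.Prime ∧ ¬ p ∣ q},
      Real.log (p : ℕ) / (((p : ℕ) : ℝ) ^ 2 * ((p : ℕ) - 1)))
      = ∑' p : ℕ, (if p.Prime ∧ ¬ p ∣ q then
          Real.log p / ((p : ℝ) ^ 2 * ((p : ℝ) - 1)) else 0) := by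
    exact tsum_subtype_eq (P := fun p => p.Prime ∧ ¬ p ∣ q)
      (fun p => Real.log p / ((p : ℝ) ^ 2 * ((p : ℝ) - 1)))
  rw [hL, hF, hP]
  have hcomm : ∑' d : ℕ, ∑' p : ℕ, W q (d, p) = ∑' p : ℕ, ∑' d : ℕ, W q (d, p) := by
    exact (Summable.tsum_comm (f := fun d p => W q (d, p)) (summable_W q)).symm
  calc ∑' d : ℕ, (if Nat.gcd d q = 1 then
          F d * ∑ p ∈ d.primeFactors, Real.log p / ((p : ℝ) - 1) else 0)
      = ∑' d : ℕ, ∑' p : ℕ, W q (d, p) := tsum_congr fun d => (inner_eq q d).symm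
    _ = ∑' p : ℕ, ∑' d : ℕ, W q (d, p) := hcomm
    _ = ∑' p : ℕ, (∑' d : ℕ, (if Nat.gcd d q = 1 then F d else 0)) *
          (if p.Prime ∧ ¬ p ∣ q then Real.log p / ((p : ℝ) ^ 2 * ((p : ℝ) - 1)) else 0) :=
        tsum_congr fun p => tsum_W_eq q p
    _ = (∑' d : ℕ, (if Nat.gcd d q = 1 then F d else 0)) *
          ∑' p : ℕ, (if p.Prime ∧ ¬ p ∣ q then
            Real.log p / ((p : ℝ) ^ 2 * ((p : ℝ) - 1)) else 0) := tsum_mul_left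
end

section
/- Let q and v be positive integers and s ≥ 1 real. Define m̃_m(Y) = ∑_{n ≤ Y, gcd(n,m)=1} (μ(n)/κ(n)) log(Y/n) and č_q(s) = ∑_{n ≤ s, gcd(n,q)=1} (μ(n)/n) log(s/n), with κ(n) = n∏_{p|n}(1+1/p). Define h_q(s) = ∑_{d ≥ 1, gcd(d,q)=1} (μ(d)/κ(d)²) (m̃_{dq}(s/d) - (π²/6)κ(dq)/(dq))². Then ∑_{d ≥ 1, gcd(d,q)=1} (μ(d)/κ(d)²) m̃_{dq}(s/d)² = h_q(s) + (π²κ(q)/(3q)) č_q(s) - π²κ(q)/(6φ(q)). -/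
open ArithmeticFunction
open scoped ArithmeticFunction.zeta

lemma kappa_pos {n : ℕ} (hn : n ≠ 0) : 0 < kappa n := by
  apply mul_pos (by exact_mod_cast Nat.pos_of_ne_zero hn)
  exact Finset.prod_pos fun p hp => by positivity

lemma kappa_ne_zero {n : ℕ} (hn : n ≠ 0) : kappa n ≠ 0 := (kappa_pos hn).ne'

lemma one_le_prod_kappa (n : ℕ) : (1:ℝ) ≤ ∏ p ∈ n.primeFactors, (1 + 1 / (p : ℝ)) := by
  have h := Finset.prod_le_prod (ι := ℕ) (s := n.primeFactors) (f := fun _ => (1:ℝ))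
    (g := fun p => 1 + 1/(p:ℝ)) ?_ ?_
  · simpa using h
  · intro i _; norm_num
  · intro i _
    have : (0:ℝ) ≤ 1/(i:ℝ) := by positivity
    linarith

lemma le_kappa {n : ℕ} : (n : ℝ) ≤ kappa n := by
  rcases eq_or_ne n 0 with rfl | hn
  · simp [kappa]
  · calc (n:ℝ) = n * 1 := by ring
    _ ≤ kappa n := mul_le_mul_of_nonneg_left (one_le_prod_kappa n) (by positivity)

lemma kappa_mul_coprime {d q : ℕ} (h : Nat.Coprime d q) :
    kappa (d * q) = kappa d * kappa q := by
  rcases eq_or_ne d 0 with rfl | hd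
  · have : q = 1 := by simpa [Nat.Coprime] using h
    simp [this, kappa]
  rcases eq_or_ne q 0 with rfl | hq
  · have : d = 1 := by simpa [Nat.Coprime] using h
    simp [this, kappa]
  unfold kappa
  rw [Nat.Coprime.primeFactors_mul h, Finset.prod_union h.disjoint_primeFactors]
  push_cast
  ring

lemma sum_divisors_eq_prod (f : ArithmeticFunction ℝ) (hf : f.IsMultiplicative) {n : ℕ}
    (hn : n ≠ 0) :
    ∑ d ∈ n.divisors, f d
      = ∏ p ∈ n.primeFactors, (∑ i ∈ Finset.range (n.factorization p + 1), f (p ^ i)) := by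
  have hg : (f * (ζ : ArithmeticFunction ℝ)).IsMultiplicative :=
    hf.mul isMultiplicative_zeta.natCast
  have h1 : (f * (ζ : ArithmeticFunction ℝ)) n = ∑ d ∈ n.divisors, f d :=
    ArithmeticFunction.coe_mul_zeta_apply
  have h2 := hg.multiplicative_factorization (f * (ζ : ArithmeticFunction ℝ)) hn
  rw [h1] at h2
  rw [h2, Nat.prod_factorization_eq_prod_primeFactors]
  apply Finset.prod_congr rfl
  intro p hp
  have hp' : p.Prime := Nat.prime_of_mem_primeFactors hp
  rw [ArithmeticFunction.coe_mul_zeta_apply, Nat.sum_divisors_prime_pow hp']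

noncomputable def F1 : ArithmeticFunction ℝ :=
  ⟨fun n => ((moebius n : ℤ) : ℝ) / (n : ℝ) ^ 2, by simp⟩

lemma F1_apply (n : ℕ) : F1 n = ((moebius n : ℤ) : ℝ) / (n : ℝ) ^ 2 := rfl

lemma F1_mult : F1.IsMultiplicative := by
  constructor
  · simp [F1_apply]
  · intro m n h
    simp only [F1_apply]
    rw [isMultiplicative_moebius.map_mul_of_coprime h]
    push_cast
    rw [mul_pow, ← div_mul_div_comm]

lemma sum_F1 {n : ℕ} (hn : n ≠ 0) :
    ∑ d ∈ n.divisors, (((moebius d : ℤ) : ℝ) / (d : ℝ) ^ 2)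
      = ∏ p ∈ n.primeFactors, (1 - 1 / (p : ℝ) ^ 2) := by
  have h := sum_divisors_eq_prod F1 F1_mult hn
  simp only [F1_apply] at h
  rw [h]
  apply Finset.prod_congr rfl
  intro p hp
  have hp' : p.Prime := Nat.prime_of_mem_primeFactors hp
  have hk : 1 ≤ n.factorization p := by
    have := Nat.support_factorization (n := n) ▸ hp
    exact Nat.one_le_iff_ne_zero.mpr (Finsupp.mem_support_iff.mp this)
  rw [← Finset.sum_subset (Finset.range_subset_range.mpr (by omega) :
      Finset.range 2 ⊆ Finset.range (n.factorization p + 1))]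
  · rw [Finset.sum_range_succ, Finset.sum_range_one]
    simp only [pow_zero, pow_one]
    rw [moebius_apply_one, moebius_apply_prime hp']
    push_cast
    have hpne : ((p:ℝ))^2 ≠ 0 := by
      have := hp'.pos
      positivity
    field_simp
    ring
  · intro i hi hi2
    simp only [Finset.mem_range] at hi hi2
    have : moebius (p ^ i) = 0 := by
      rw [moebius_apply_prime_pow hp' (by omega)]
      simp only [if_neg (by omega : ¬ i = 1)]
    rw [this]
    simp

lemma sum_inv_divisors {m : ℕ} (hm : Squarefree m) :
    ∑ d ∈ m.divisors, (1 : ℝ) / (d : ℝ)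
      = ∏ p ∈ m.primeFactors, (1 + 1 / (p : ℝ)) := by
  have hm0 : m ≠ 0 := hm.ne_zero
  set Fi : ArithmeticFunction ℝ := ⟨fun n => (1 : ℝ) / (n : ℝ), by simp⟩ with hFi
  have hFiap : ∀ n, Fi n = 1 / (n : ℝ) := fun n => rfl
  have hFim : Fi.IsMultiplicative := by
    constructor
    · simp [hFiap]
    · intro a b h
      simp only [hFiap]
      push_cast
      rw [div_mul_div_comm, one_mul]
  have h := sum_divisors_eq_prod Fi hFim hm0
  simp only [hFiap] at h
  rw [h]
  apply Finset.prod_congr rfl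
  intro p hp
  have hp' : p.Prime := Nat.prime_of_mem_primeFactors hp
  have hk1 : m.factorization p = 1 := by
    have hle := (Nat.squarefree_iff_factorization_le_one hm0).mp hm p
    have : 1 ≤ m.factorization p := by
      have := Nat.support_factorization (n := m) ▸ hp
      exact Nat.one_le_iff_ne_zero.mpr (Finsupp.mem_support_iff.mp this)
    omega
  rw [hk1]
  rw [Finset.sum_range_succ, Finset.sum_range_one]
  simp

open scoped LSeries.notation

lemma conv_eq (q : ℕ) (hq : q ≠ 0) :
    (fun n => if Nat.gcd n q = 1 then ((moebius n : ℤ) : ℂ) else 0) ⍟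
      (fun n => if n ∣ q then ((moebius n : ℤ) : ℂ) else 0)
    = fun n => ((moebius n : ℤ) : ℂ) := by
  classical
  funext n
  rw [LSeries.convolution_def]
  beta_reduce
  rcases eq_or_ne n 0 with rfl | hn
  · simp
  by_cases hsq : Squarefree n
  · set g := Nat.gcd n q with hg
    have hgdvdn : g ∣ n := Nat.gcd_dvd_left n q
    have hgdvdq : g ∣ q := Nat.gcd_dvd_right n q
    have hg0 : g ≠ 0 := by
      intro h
      exact hn (Nat.gcd_eq_zero_iff.mp h).1
    have hmuln : n / g * g = n := Nat.div_mul_cancel hgdvdn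
    have hmem : ((n / g, g) : ℕ × ℕ) ∈ n.divisorsAntidiagonal := by
      rw [Nat.mem_divisorsAntidiagonal]
      exact ⟨hmuln, hn⟩
    have hcop : Nat.Coprime (n / g) g := by
      have h2 := hsq
      rw [← hmuln] at h2
      exact ((Nat.squarefree_mul_iff).mp h2).1
    have hcopq : Nat.gcd (n / g) q = 1 := by
      by_contra hne
      have hp := Nat.minFac_prime hne
      set p := (Nat.gcd (n / g) q).minFac with hpdef
      have hp1 : p ∣ n / g := (Nat.minFac_dvd _).trans (Nat.gcd_dvd_left _ _)
      have hp2 : p ∣ q := (Nat.minFac_dvd _).trans (Nat.gcd_dvd_right _ _)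
      have hp3 : p ∣ n := hp1.trans (Nat.div_dvd_of_dvd hgdvdn)
      have hp4 : p ∣ g := Nat.dvd_gcd hp3 hp2
      have hpp : p * p ∣ n := by
        have h5 := mul_dvd_mul hp1 hp4
        rwa [hmuln] at h5
      exact hp.not_isUnit (hsq p hpp)
    rw [Finset.sum_eq_single ((n / g, g) : ℕ × ℕ)]
    · simp only [if_pos hcopq, if_pos hgdvdq]
      rw [← Int.cast_mul, ← isMultiplicative_moebius.map_mul_of_coprime hcop, hmuln]
    · rintro ⟨a, b⟩ hab hne
      rw [Nat.mem_divisorsAntidiagonal] at hab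
      by_cases ha : Nat.gcd a q = 1
      swap
      · simp [if_neg ha]
      by_cases hb : b ∣ q
      swap
      · simp [if_neg hb]
      exfalso
      apply hne
      have hbg : b = g := by
        have h1 : Nat.gcd n q = Nat.gcd b q := by
          rw [← hab.1]
          exact Nat.Coprime.gcd_mul_left_cancel b ha
        rw [hg, h1, Nat.gcd_eq_left hb]
      have hb0 : 0 < b := Nat.pos_of_ne_zero (by rintro rfl; exact hq (Nat.eq_zero_of_zero_dvd hb))
      have hag : a = n / g := by
        rw [← hbg, ← hab.1, Nat.mul_div_cancel a hb0]
      rw [hag, hbg]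
    · intro h
      exact absurd hmem h
  · have hμ : moebius n = 0 := moebius_eq_zero_of_not_squarefree hsq
    rw [hμ]
    rw [Int.cast_zero]
    apply Finset.sum_eq_zero
    rintro ⟨a, b⟩ hab
    rw [Nat.mem_divisorsAntidiagonal] at hab
    by_cases ha : Nat.gcd a q = 1
    swap
    · simp [if_neg ha]
    by_cases hb : b ∣ q
    swap
    · simp [if_neg hb]
    simp only [if_pos ha, if_pos hb]
    by_cases hsa : Squarefree a
    swap
    · rw [moebius_eq_zero_of_not_squarefree hsa]; simp
    by_cases hsb : Squarefree b
    swap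
    · rw [moebius_eq_zero_of_not_squarefree hsb]; simp
    exfalso
    have hcopab : Nat.Coprime a b := Nat.Coprime.coprime_dvd_right hb ha
    exact hsq (hab.1 ▸ (Nat.squarefree_mul hcopab).mpr ⟨hsa, hsb⟩)

lemma S_mul_T (q : ℕ) (hq : q ≠ 0) :
    (∑' d : {d : ℕ // 0 < d ∧ Nat.gcd d q = 1},
        ((moebius (d : ℕ) : ℤ) : ℝ) / ((d : ℕ) : ℝ) ^ 2)
      * (Real.pi ^ 2 / 6) * (∏ p ∈ q.primeFactors, (1 - 1 / (p : ℝ) ^ 2)) = 1 := by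
  classical
  set fC : ℕ → ℂ := fun n => if Nat.gcd n q = 1 then ((moebius n : ℤ) : ℂ) else 0 with hfC
  set gC : ℕ → ℂ := fun n => if n ∣ q then ((moebius n : ℤ) : ℂ) else 0 with hgC
  have h2 : 1 < (2 : ℂ).re := by norm_num
  have hnormμ : ∀ n : ℕ, ‖((moebius n : ℤ) : ℂ)‖ ≤ 1 := by
    intro n
    rw [Complex.norm_intCast]
    exact_mod_cast abs_moebius_le_one
  have hfs : LSeriesSummable fC 2 := by
    apply LSeriesSummable_of_bounded_of_one_lt_re (m := 1) _ h2
    intro n _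
    simp only [hfC]
    split_ifs
    · exact hnormμ n
    · simp
  have hgs : LSeriesSummable gC 2 := by
    apply LSeriesSummable_of_bounded_of_one_lt_re (m := 1) _ h2
    intro n _
    simp only [hgC]
    split_ifs
    · exact hnormμ n
    · simp
  have hLμ : LSeries (↗moebius) 2 = LSeries fC 2 * LSeries gC 2 := by
    rw [← LSeries_convolution' hfs hgs]
    rw [hfC, hgC, conv_eq q hq]
  have hz := ArithmeticFunction.LSeries_zeta_mul_Lseries_moebius (s := 2) h2
  have hζval : LSeries (↗(ζ : ArithmeticFunction ℕ)) 2 = ((Real.pi : ℂ) ^ 2 / 6) := by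
    rw [ArithmeticFunction.LSeries_zeta_eq_riemannZeta h2, riemannZeta_two]
  -- value of LSeries gC 2
  have hLg : LSeries gC 2
      = ((∑ b ∈ q.divisors, ((moebius b : ℤ) : ℝ) / (b : ℝ) ^ 2 : ℝ) : ℂ) := by
    have hz0 : ∀ n ∉ q.divisors, LSeries.term gC 2 n = 0 := by
      intro n hnmem
      rcases eq_or_ne n 0 with rfl | hn
      · exact LSeries.term_zero _ _
      · rw [LSeries.term_of_ne_zero hn]
        have : ¬ n ∣ q := fun hdvd => hnmem (Nat.mem_divisors.mpr ⟨hdvd, hq⟩)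
        rw [hgC]
        simp [this]
    rw [LSeries, tsum_eq_sum hz0]
    rw [Complex.ofReal_sum]
    apply Finset.sum_congr rfl
    intro b hb
    have hb0 : b ≠ 0 := (Nat.pos_of_mem_divisors hb).ne'
    have hbq : b ∣ q := (Nat.mem_divisors.mp hb).1
    rw [LSeries.term_of_ne_zero hb0, hgC]
    simp only [if_pos hbq]
    have h2n : (2 : ℂ) = ((2 : ℕ) : ℂ) := by norm_num
    rw [h2n, Complex.cpow_natCast]
    push_cast
    ring
  -- value of LSeries fC 2
  set rfun : ℕ → ℝ := fun n =>
    if 0 < n ∧ Nat.gcd n q = 1 then ((moebius n : ℤ) : ℝ) / (n : ℝ) ^ 2 else 0 with hrfun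
  have hLf : LSeries fC 2 = ((∑' n, rfun n : ℝ) : ℂ) := by
    rw [Complex.ofReal_tsum]
    apply tsum_congr
    intro n
    rcases eq_or_ne n 0 with rfl | hn
    · rw [LSeries.term_zero]
      simp [hrfun]
    · rw [LSeries.term_of_ne_zero hn]
      have h2n : (2 : ℂ) = ((2 : ℕ) : ℂ) := by norm_num
      rw [h2n, Complex.cpow_natCast]
      by_cases h : Nat.gcd n q = 1
      · rw [hfC, hrfun]
        simp only [if_pos h]
        rw [if_pos (show 0 < n ∧ Nat.gcd n q = 1 from ⟨Nat.pos_of_ne_zero hn, h⟩)]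
        push_cast
        ring
      · rw [hfC, hrfun]
        simp only [if_neg h]
        rw [if_neg (by tauto)]
        simp
  have hsubty : (∑' d : {d : ℕ // 0 < d ∧ Nat.gcd d q = 1},
      ((moebius (d : ℕ) : ℤ) : ℝ) / ((d : ℕ) : ℝ) ^ 2) = ∑' n, rfun n := by
    have h := tsum_subtype {d : ℕ | 0 < d ∧ Nat.gcd d q = 1}
      (fun n => ((moebius n : ℤ) : ℝ) / (n : ℝ) ^ 2)
    refine h.trans (tsum_congr fun n => ?_)
    rw [Set.indicator_apply, hrfun]
    by_cases hc : 0 < n ∧ Nat.gcd n q = 1 <;> simp [Set.mem_setOf_eq, hc]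
  -- put together
  rw [hLμ, hLf, hLg, hζval] at hz
  have hre : Real.pi ^ 2 / 6 * ((∑' n, rfun n)
      * (∑ b ∈ q.divisors, ((moebius b : ℤ) : ℝ) / (b : ℝ) ^ 2)) = 1 := by
    exact_mod_cast hz
  rw [hsubty, ← sum_F1 hq]
  linear_combination hre


/-- `m̃_m(Y) = ∑_{n ≤ Y, (n,m)=1} (μ(n)/κ(n)) log(Y/n)`. -/
noncomputable def mtilde (m : ℕ) (Y : ℝ) : ℝ :=
  ∑ n ∈ (Finset.Icc 1 ⌊Y⌋₊).filter (fun n => Nat.gcd n m = 1),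
    ((moebius n : ℝ) / kappa n) * Real.log (Y / n)

/-- `č_q(s) = ∑_{n ≤ s, (n,q)=1} (μ(n)/n) log(s/n)`. -/
noncomputable def mcheck (q : ℕ) (s : ℝ) : ℝ :=
  ∑ n ∈ (Finset.Icc 1 ⌊s⌋₊).filter (fun n => Nat.gcd n q = 1),
    ((moebius n : ℝ) / n) * Real.log (s / n)

lemma claim1 (q : ℕ) (hq' : 0 < q) (s : ℝ) (hs : 1 ≤ s) :
    ∑ d ∈ (Finset.Icc 1 ⌊s⌋₊).filter (fun d => Nat.gcd d q = 1),
        ((moebius d : ℝ) / (d * kappa d)) * mtilde (d * q) (s / d)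
      = mcheck q s := by
  classical
  have hs0 : (0:ℝ) < s := lt_of_lt_of_le one_pos hs
  -- expand mtilde and make it a sigma sum
  rw [mcheck]
  simp only [mtilde, Finset.mul_sum]
  rw [Finset.sum_sigma']
  -- turn the RHS into a sigma sum as well
  have per_m : ∀ m ∈ (Finset.Icc 1 ⌊s⌋₊).filter (fun n => Nat.gcd n q = 1),
      ((moebius m : ℝ) / m) * Real.log (s / m)
        = ∑ p ∈ m.divisorsAntidiagonal.filter (fun p => Nat.gcd p.2 (p.1 * q) = 1),
            ((moebius p.1 : ℝ) / (p.1 * kappa p.1))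
              * (((moebius p.2 : ℝ) / kappa p.2) * Real.log (s / m)) := by
    intro m hm
    rw [Finset.mem_filter, Finset.mem_Icc] at hm
    obtain ⟨⟨hm1, hm2⟩, hmq⟩ := hm
    have hm0 : m ≠ 0 := by omega
    by_cases hsq : Squarefree m
    · -- filter condition is automatic
      have hfilter : m.divisorsAntidiagonal.filter (fun p => Nat.gcd p.2 (p.1 * q) = 1)
          = m.divisorsAntidiagonal := by
        apply Finset.filter_true_of_mem
        rintro ⟨d, n⟩ hp
        rw [Nat.mem_divisorsAntidiagonal] at hp
        have hdn : d * n = m := hp.1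
        have hcopdn : Nat.Coprime d n := by
          have h2 := hsq; rw [← hdn] at h2
          exact ((Nat.squarefree_mul_iff).mp h2).1
        have hnq : Nat.Coprime n q := by
          have : n ∣ m := Dvd.intro_left d hdn
          exact Nat.Coprime.coprime_dvd_left this hmq
        exact (Nat.coprime_mul_iff_right).mpr ⟨hcopdn.symm, hnq⟩
      rw [hfilter]
      have hterm : ∀ p ∈ m.divisorsAntidiagonal,
          ((moebius p.1 : ℝ) / (p.1 * kappa p.1))
              * (((moebius p.2 : ℝ) / kappa p.2) * Real.log (s / m))
            = ((moebius m : ℝ) / kappa m * Real.log (s / m)) * (1 / (p.1 : ℝ)) := by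
        rintro ⟨d, n⟩ hp
        rw [Nat.mem_divisorsAntidiagonal] at hp
        have hdn : d * n = m := hp.1
        have hcopdn : Nat.Coprime d n := by
          have h2 := hsq; rw [← hdn] at h2
          exact ((Nat.squarefree_mul_iff).mp h2).1
        have hμ : ((moebius d : ℤ) : ℝ) * ((moebius n : ℤ) : ℝ) = ((moebius m : ℤ) : ℝ) := by
          rw [← Int.cast_mul, ← isMultiplicative_moebius.map_mul_of_coprime hcopdn, hdn]
        have hκ : kappa d * kappa n = kappa m := by
          rw [← kappa_mul_coprime hcopdn, hdn]
        simp only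
        rw [show ((moebius d : ℝ) / ((d : ℝ) * kappa d))
              * (((moebius n : ℝ) / kappa n) * Real.log (s / m))
            = (((moebius d : ℤ) : ℝ) * ((moebius n : ℤ) : ℝ)) / (kappa d * kappa n)
              * Real.log (s / m) * (1 / (d : ℝ)) from by push_cast; ring]
        rw [hμ, hκ]
      have hsum1 : (∑ p ∈ m.divisorsAntidiagonal, (1 / (p.1 : ℝ))) = kappa m / m := by
        rw [Nat.sum_divisorsAntidiagonal (fun d n => (1 : ℝ) / d)]
        rw [sum_inv_divisors hsq]
        rw [kappa]
        have hm0' : ((m:ℝ)) ≠ 0 := by exact_mod_cast hm0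
        field_simp
      rw [Finset.sum_congr rfl hterm, ← Finset.mul_sum, hsum1]
      have hκ0 : kappa m ≠ 0 := kappa_ne_zero hm0
      have hm0' : ((m:ℝ)) ≠ 0 := by exact_mod_cast hm0
      field_simp
    · rw [moebius_eq_zero_of_not_squarefree hsq]
      rw [Int.cast_zero, zero_div, zero_mul]
      symm
      apply Finset.sum_eq_zero
      rintro ⟨d, n⟩ hp
      rw [Finset.mem_filter, Nat.mem_divisorsAntidiagonal] at hp
      obtain ⟨⟨hdn, -⟩, hgcd⟩ := hp
      simp only
      by_cases hsd : Squarefree d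
      swap
      · rw [moebius_eq_zero_of_not_squarefree hsd]; simp
      by_cases hsn : Squarefree n
      swap
      · rw [moebius_eq_zero_of_not_squarefree hsn]; simp
      exfalso
      have hcop : Nat.Coprime d n := ((Nat.coprime_mul_iff_right).mp hgcd).1.symm
      exact hsq (hdn ▸ (Nat.squarefree_mul hcop).mpr ⟨hsd, hsn⟩)
  rw [Finset.sum_congr rfl per_m, Finset.sum_sigma']
  -- now a bijection between the two sigma sums
  refine Finset.sum_nbij' (fun a => ⟨a.1 * a.2, (a.1, a.2)⟩) (fun b => ⟨b.2.1, b.2.2⟩)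
    ?_ ?_ ?_ ?_ ?_
  · rintro ⟨d, n⟩ ha
    rw [Finset.mem_sigma, Finset.mem_filter, Finset.mem_Icc,
      Finset.mem_filter, Finset.mem_Icc] at ha
    obtain ⟨⟨⟨hd1, hd2⟩, hdq⟩, ⟨hn1, hn2⟩, hgcd⟩ := ha
    have hd0 : (0:ℝ) < d := by exact_mod_cast hd1
    have hnle : (n : ℝ) ≤ s / d := by
      have := (Nat.le_floor_iff (by positivity)).mp hn2
      exact_mod_cast this
    have hmle : ((d * n : ℕ) : ℝ) ≤ s := by
      push_cast
      rw [← le_div_iff₀' hd0]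
      exact hnle
    rw [Finset.mem_sigma, Finset.mem_filter, Finset.mem_Icc]
    refine ⟨⟨⟨?_, ?_⟩, ?_⟩, ?_⟩
    · exact Nat.one_le_iff_ne_zero.mpr (by positivity)
    · exact Nat.le_floor hmle
    · exact (Nat.coprime_mul_iff_left).mpr ⟨hdq, ((Nat.coprime_mul_iff_right).mp hgcd).2⟩
    · rw [Finset.mem_filter, Nat.mem_divisorsAntidiagonal]
      exact ⟨⟨rfl, by positivity⟩, hgcd⟩
  · rintro ⟨m, d, n⟩ hb
    rw [Finset.mem_sigma, Finset.mem_filter, Finset.mem_Icc, Finset.mem_filter,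
      Nat.mem_divisorsAntidiagonal] at hb
    obtain ⟨⟨⟨hm1, hm2⟩, hmq⟩, ⟨hdn, hm0⟩, hgcd⟩ := hb
    have hd0 : d ≠ 0 := by rintro rfl; simp at hdn; exact hm0 hdn.symm
    have hn0 : n ≠ 0 := by rintro rfl; simp at hdn; exact hm0 hdn.symm
    have hdd : d ∣ m := Dvd.intro n hdn
    have hnd : n ∣ m := Dvd.intro_left d hdn
    have hmles : (m : ℝ) ≤ s := le_trans (by exact_mod_cast hm2 : (m:ℝ) ≤ (⌊s⌋₊ : ℝ))
      (Nat.floor_le hs0.le)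
    have hd0' : (0:ℝ) < d := by exact_mod_cast Nat.pos_of_ne_zero hd0
    rw [Finset.mem_sigma, Finset.mem_filter, Finset.mem_Icc, Finset.mem_filter, Finset.mem_Icc]
    refine ⟨⟨⟨?_, ?_⟩, ?_⟩, ⟨?_, ?_⟩, hgcd⟩
    · exact Nat.one_le_iff_ne_zero.mpr hd0
    · exact le_trans (Nat.le_of_dvd (Nat.pos_of_ne_zero hm0) hdd) hm2
    · exact Nat.Coprime.coprime_dvd_left hdd hmq
    · exact Nat.one_le_iff_ne_zero.mpr hn0
    · apply Nat.le_floor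
      rw [le_div_iff₀' hd0']
      calc ((d:ℝ) * n) = ((d * n : ℕ) : ℝ) := by push_cast; ring
      _ = (m : ℝ) := by rw [hdn]
      _ ≤ s := hmles
  · rintro ⟨d, n⟩ _
    rfl
  · rintro ⟨m, d, n⟩ hb
    simp only [Finset.mem_sigma, Finset.mem_filter, Nat.mem_divisorsAntidiagonal] at hb
    obtain ⟨-, ⟨hdn, -⟩, -⟩ := hb
    simp only
    exact Sigma.ext hdn (by subst hdn; rfl)
  · rintro ⟨d, n⟩ ha
    rw [Finset.mem_sigma, Finset.mem_filter, Finset.mem_Icc] at ha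
    obtain ⟨⟨⟨hd1, -⟩, -⟩, -⟩ := ha
    have hd0 : (d:ℝ) ≠ 0 := by
      have := hd1; positivity
    simp only
    rw [div_div]
    push_cast
    ring_nf


/-- `h_q(s) = ∑_{d ≥ 1, (d,q)=1} (μ(d)/κ(d)²) (m̃_{dq}(s/d) - (π²/6)κ(dq)/(dq))²`. -/
noncomputable def hq (q : ℕ) (s : ℝ) : ℝ :=
  ∑' d : {d : ℕ // 0 < d ∧ Nat.gcd d q = 1},
    ((moebius (d : ℕ) : ℝ) / kappa (d : ℕ) ^ 2) *
      (mtilde ((d : ℕ) * q) (s / (d : ℕ)) -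
        (Real.pi ^ 2 / 6) * kappa ((d : ℕ) * q) / ((d : ℕ) * q)) ^ 2

theorem stmt_15 (q : ℕ) (hq' : 0 < q) (s : ℝ) (hs : 1 ≤ s) :
    ∑' d : {d : ℕ // 0 < d ∧ Nat.gcd d q = 1},
        ((moebius (d : ℕ) : ℝ) / kappa (d : ℕ) ^ 2) * mtilde ((d : ℕ) * q) (s / (d : ℕ)) ^ 2 =
      hq q s + (Real.pi ^ 2 * kappa q / (3 * q)) * mcheck q s -
        Real.pi ^ 2 * kappa q / (6 * q.totient) := by
  classical
  have hq0 : q ≠ 0 := hq'.ne'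
  have hs0 : (0:ℝ) < s := lt_of_lt_of_le one_pos hs
  set c : {d : ℕ // 0 < d ∧ Nat.gcd d q = 1} → ℝ :=
    fun d => ((moebius (d : ℕ) : ℝ) / kappa (d : ℕ) ^ 2) with hc
  set A : {d : ℕ // 0 < d ∧ Nat.gcd d q = 1} → ℝ :=
    fun d => mtilde ((d : ℕ) * q) (s / (d : ℕ)) with hA
  set B : {d : ℕ // 0 < d ∧ Nat.gcd d q = 1} → ℝ :=
    fun d => (Real.pi ^ 2 / 6) * kappa ((d : ℕ) * q) / ((d : ℕ) * q) with hB
  -- Basic per-element facts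
  have hd0 : ∀ d : {d : ℕ // 0 < d ∧ Nat.gcd d q = 1}, (d : ℕ) ≠ 0 := fun d => d.2.1.ne'
  have hBval : ∀ d : {d : ℕ // 0 < d ∧ Nat.gcd d q = 1},
      c d * B d ^ 2 = (Real.pi ^ 2 / 6) ^ 2 * (kappa q / q) ^ 2
        * ((moebius (d : ℕ) : ℝ) / ((d : ℕ) : ℝ) ^ 2) := by
    intro d
    rw [hc, hB]
    simp only
    rw [kappa_mul_coprime d.2.2]
    have h1 : kappa (d : ℕ) ≠ 0 := kappa_ne_zero (hd0 d)
    have h2 : kappa q ≠ 0 := kappa_ne_zero hq0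
    have h3 : ((d : ℕ) : ℝ) ≠ 0 := Nat.cast_ne_zero.mpr (hd0 d)
    have h4 : ((q : ℕ) : ℝ) ≠ 0 := Nat.cast_ne_zero.mpr hq0
    field_simp
  -- summability of the B² part
  have hsumw : Summable (fun d : {d : ℕ // 0 < d ∧ Nat.gcd d q = 1} =>
      ((moebius (d : ℕ) : ℝ) / ((d : ℕ) : ℝ) ^ 2)) := by
    have hbase : Summable (fun n : ℕ => 1 / (n : ℝ) ^ 2) :=
      Real.summable_one_div_nat_pow.mpr one_lt_two
    have hsub : Summable (fun d : {d : ℕ // 0 < d ∧ Nat.gcd d q = 1} =>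
        1 / ((d : ℕ) : ℝ) ^ 2) :=
      hbase.comp_injective Subtype.val_injective
    apply Summable.of_norm_bounded hsub
    intro d
    rw [Real.norm_eq_abs, abs_div, abs_pow, Nat.abs_cast]
    have hd2 : (0:ℝ) < ((d : ℕ) : ℝ) ^ 2 := by
      have := d.2.1
      positivity
    have habs : |((moebius (d : ℕ) : ℤ) : ℝ)| ≤ 1 := by exact_mod_cast abs_moebius_le_one
    exact div_le_div₀ zero_le_one habs hd2 le_rfl
  have hsumB2 : Summable (fun d : {d : ℕ // 0 < d ∧ Nat.gcd d q = 1} => c d * B d ^ 2) := by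
    rw [funext hBval]
    exact hsumw.mul_left _
  -- A vanishes for large d
  have hAzero : ∀ d : {d : ℕ // 0 < d ∧ Nat.gcd d q = 1}, ⌊s⌋₊ < (d : ℕ) → A d = 0 := by
    intro d hd
    rw [hA]
    simp only
    have hlt : s / ((d : ℕ) : ℝ) < 1 := by
      rw [div_lt_one (by exact_mod_cast d.2.1)]
      calc s < ⌊s⌋₊ + 1 := Nat.lt_floor_add_one s
      _ ≤ (d : ℕ) := by exact_mod_cast hd
    have hfl : ⌊s / ((d : ℕ) : ℝ)⌋₊ = 0 := Nat.floor_eq_zero.mpr hlt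
    rw [mtilde, hfl]
    simp
  -- the support finset
  set F : Finset {d : ℕ // 0 < d ∧ Nat.gcd d q = 1} :=
    ((Finset.Icc 1 ⌊s⌋₊).filter (fun d => Nat.gcd d q = 1)).attach.map
      ⟨fun x => ⟨x.1, ⟨by
          have := x.2
          rw [Finset.mem_filter, Finset.mem_Icc] at this
          omega, by
          have := x.2
          rw [Finset.mem_filter] at this
          exact this.2⟩⟩,
        by
          intro a b hab
          have h2 : (a : ℕ) = (b : ℕ) :=
            congrArg (fun z : {d : ℕ // 0 < d ∧ Nat.gcd d q = 1} => z.val) hab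
          exact Subtype.ext h2⟩ with hF
  have hnotmem : ∀ d : {d : ℕ // 0 < d ∧ Nat.gcd d q = 1}, d ∉ F → ⌊s⌋₊ < (d : ℕ) := by
    intro d hd
    by_contra hcon
    push_neg at hcon
    apply hd
    rw [hF, Finset.mem_map]
    refine ⟨⟨(d : ℕ), ?_⟩, Finset.mem_attach _ _, ?_⟩
    · rw [Finset.mem_filter, Finset.mem_Icc]
      exact ⟨⟨d.2.1, hcon⟩, d.2.2⟩
    · exact Subtype.ext rfl
  have hsumA2 : Summable (fun d : {d : ℕ // 0 < d ∧ Nat.gcd d q = 1} => c d * A d ^ 2) := by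
    apply summable_of_ne_finset_zero (s := F)
    intro d hd
    rw [hAzero d (hnotmem d hd)]
    ring
  have hsumAB : Summable (fun d : {d : ℕ // 0 < d ∧ Nat.gcd d q = 1} => c d * A d * B d) := by
    apply summable_of_ne_finset_zero (s := F)
    intro d hd
    rw [hAzero d (hnotmem d hd)]
    ring
  have hsumG : Summable (fun d : {d : ℕ // 0 < d ∧ Nat.gcd d q = 1} =>
      c d * (A d - B d) ^ 2) := by
    have heq : (fun d : {d : ℕ // 0 < d ∧ Nat.gcd d q = 1} => c d * (A d - B d) ^ 2)
        = fun d => (c d * A d ^ 2 - 2 * (c d * A d * B d)) + c d * B d ^ 2 :=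
      funext fun d => by ring
    rw [heq]
    exact (hsumA2.sub (hsumAB.mul_left 2)).add hsumB2
  -- main splitting
  have hmain : ∑' d : {d : ℕ // 0 < d ∧ Nat.gcd d q = 1}, c d * A d ^ 2
      = (∑' d : {d : ℕ // 0 < d ∧ Nat.gcd d q = 1}, c d * (A d - B d) ^ 2)
        + (2 * (∑' d : {d : ℕ // 0 < d ∧ Nat.gcd d q = 1}, c d * A d * B d)
            - ∑' d : {d : ℕ // 0 < d ∧ Nat.gcd d q = 1}, c d * B d ^ 2) := by
    rw [← tsum_mul_left, ← Summable.tsum_sub (hsumAB.mul_left 2) hsumB2,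
      ← Summable.tsum_add hsumG ((hsumAB.mul_left 2).sub hsumB2)]
    exact tsum_congr fun d => by ring
  -- value of the AB series
  have hABval : ∀ d : {d : ℕ // 0 < d ∧ Nat.gcd d q = 1},
      c d * A d * B d = (Real.pi ^ 2 / 6) * (kappa q / q)
        * (((moebius (d : ℕ) : ℝ) / ((d : ℕ) * kappa (d : ℕ))) * A d) := by
    intro d
    rw [hc, hB]
    simp only
    rw [kappa_mul_coprime d.2.2]
    have h1 : kappa (d : ℕ) ≠ 0 := kappa_ne_zero (hd0 d)
    have h2 : kappa q ≠ 0 := kappa_ne_zero hq0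
    have h3 : ((d : ℕ) : ℝ) ≠ 0 := Nat.cast_ne_zero.mpr (hd0 d)
    have h4 : ((q : ℕ) : ℝ) ≠ 0 := Nat.cast_ne_zero.mpr hq0
    field_simp
  have hABtsum : ∑' d : {d : ℕ // 0 < d ∧ Nat.gcd d q = 1}, c d * A d * B d
      = (Real.pi ^ 2 / 6) * (kappa q / q) * mcheck q s := by
    rw [tsum_congr hABval, tsum_mul_left]
    congr 1
    have hvan : ∀ d ∉ F, ((moebius (d : ℕ) : ℝ) / ((d : ℕ) * kappa (d : ℕ))) * A d = 0 := by
      intro d hd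
      rw [hAzero d (hnotmem d hd)]
      ring
    rw [tsum_eq_sum hvan, hF, Finset.sum_map]
    rw [← claim1 q hq' s hs]
    exact Finset.sum_attach ((Finset.Icc 1 ⌊s⌋₊).filter (fun d => Nat.gcd d q = 1))
      (fun d => ((moebius d : ℝ) / (d * kappa d)) * mtilde (d * q) (s / d))
  -- value of the B² series
  have hκq : kappa q / q = ∏ p ∈ q.primeFactors, (1 + 1 / (p : ℝ)) := by
    rw [kappa]
    have h4 : ((q : ℕ) : ℝ) ≠ 0 := Nat.cast_ne_zero.mpr hq0
    field_simp
  have hφq : ((q.totient : ℕ) : ℝ) = q * ∏ p ∈ q.primeFactors, (1 - 1 / (p : ℝ)) := by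
    have h := congrArg (fun x : ℚ => (x : ℝ)) (Nat.totient_eq_mul_prod_factors q)
    push_cast at h
    simpa [one_div] using h
  have hT : (∏ p ∈ q.primeFactors, (1 - 1 / (p : ℝ) ^ 2))
      = (∏ p ∈ q.primeFactors, (1 + 1 / (p : ℝ)))
        * ∏ p ∈ q.primeFactors, (1 - 1 / (p : ℝ)) := by
    rw [← Finset.prod_mul_distrib]
    apply Finset.prod_congr rfl
    intro p hp
    have hp0 : ((p : ℕ) : ℝ) ≠ 0 :=
      Nat.cast_ne_zero.mpr (Nat.prime_of_mem_primeFactors hp).pos.ne'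
    field_simp
    ring
  have hST := S_mul_T q hq0
  have hκpos : 0 < kappa q := kappa_pos hq0
  have hφpos : (0:ℝ) < (q.totient : ℕ) := by
    exact_mod_cast Nat.totient_pos.mpr hq'
  have hqpos : (0:ℝ) < (q : ℕ) := by exact_mod_cast hq'
  have hπpos : (0:ℝ) < Real.pi := Real.pi_pos
  have hB2tsum : ∑' d : {d : ℕ // 0 < d ∧ Nat.gcd d q = 1}, c d * B d ^ 2
      = Real.pi ^ 2 * kappa q / (6 * q.totient) := by
    rw [tsum_congr hBval, tsum_mul_left]
    set S := ∑' d : {d : ℕ // 0 < d ∧ Nat.gcd d q = 1},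
      ((moebius (d : ℕ) : ℝ) / ((d : ℕ) : ℝ) ^ 2) with hS
    rw [hT, ← hκq] at hST
    -- hST : S * (π²/6) * ((κq/q) * ∏(1-1/p)) = 1
    have hprod : (∏ p ∈ q.primeFactors, (1 - 1 / (p : ℝ)))
        = (q.totient : ℝ) / q := by
      rw [hφq]
      field_simp
    rw [hprod] at hST
    -- solve for S and finish
    have hKQ : kappa q / (q:ℝ) ≠ 0 := by positivity
    have hfrac : (q.totient : ℝ) / (q:ℝ) ≠ 0 := by positivity
    have hπ6 : (Real.pi ^ 2 / 6 : ℝ) ≠ 0 := by positivity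
    have hSval : S = 6 / Real.pi ^ 2 * ((q:ℝ) / kappa q) * ((q:ℝ) / (q.totient : ℝ)) := by
      have h6 : Real.pi ^ 2 ≠ 0 := by positivity
      have hκ0 : kappa q ≠ 0 := hκpos.ne'
      have hφ0 : ((q.totient : ℕ) : ℝ) ≠ 0 := hφpos.ne'
      have hq0' : ((q : ℕ) : ℝ) ≠ 0 := hqpos.ne'
      field_simp at hST ⊢
      linarith [hST]
    rw [hSval]
    have hκ0 : kappa q ≠ 0 := hκpos.ne'
    have hφ0 : ((q.totient : ℕ) : ℝ) ≠ 0 := hφpos.ne'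
    have hq0' : ((q : ℕ) : ℝ) ≠ 0 := hqpos.ne'
    have h6 : Real.pi ^ 2 ≠ 0 := by positivity
    field_simp
  -- put everything together
  have : ∑' d : {d : ℕ // 0 < d ∧ Nat.gcd d q = 1}, c d * A d ^ 2
      = hq q s + (Real.pi ^ 2 * kappa q / (3 * q)) * mcheck q s
        - Real.pi ^ 2 * kappa q / (6 * q.totient) := by
    rw [hmain, hABtsum, hB2tsum]
    have hhq : hq q s = ∑' d : {d : ℕ // 0 < d ∧ Nat.gcd d q = 1}, c d * (A d - B d) ^ 2 := rfl
    rw [hhq]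
    ring
  exact this
end
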